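/- Let D_{2m} = ⟨r, s | r^m = s² = 1, srs = r⁻¹⟩ be the dihedral group and let φ, ψ : D_{2m} → S_n be homomorphisms that are generator-conjugate with respect to r, s and satisfy φ(r) = ψ(r) = σ, where σ = σ₁⋯σ_l with each σᵢ a product of kᵢ pairwise disjoint cycles of length dᵢ and the dᵢ pairwise distinct. Write φ(s) = μπ₁⋯π_l and ψ(s) = μ'π₁'⋯π_l' with μ, μ' ∈ S_{Fix(σ)} and πᵢ, πᵢ' ∈ H_{σᵢ}. Then φ and ψ are conjugate if and only if: (i) μ and μ' are conjugate in S_n; (ii) for every 1 ≤ i ≤ l, πᵢ and πᵢ' are conjugate in S_n and their images under the induced homomorphism H_{σᵢ} → H_{σᵢ}/K_{H_{σᵢ}} ≅ S_{kᵢ} have the same cycle type. -/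

import Mathlib

open Equiv Equiv.Perm Finset

/-- The "non-trivial centralizer" `Cent₀(σ)`: permutations commuting with `σ`
whose support is contained in the support of `σ`. -/
def Cent0 {n : ℕ} (σ : Equiv.Perm (Fin n)) : Subgroup (Equiv.Perm (Fin n)) where
  carrier := {π | Commute π σ ∧ π.support ⊆ σ.support}
  one_mem' := ⟨Commute.one_left σ, by simp⟩
  mul_mem' := by
    intro a b ha hb
    exact ⟨ha.1.mul_left hb.1, (Equiv.Perm.support_mul_le a b).trans (sup_le ha.2 hb.2)⟩
  inv_mem' := by
    intro a ha
    exact ⟨ha.1.inv_left, by rw [Equiv.Perm.support_inv]; exact ha.2⟩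

/-- The product `∏_{i ∈ s} τᵢ^{zᵢ}` of powers of pairwise disjoint permutations. -/
def Kprod {n k : ℕ} (τ : Fin k → Equiv.Perm (Fin n))
    (hdisj : ∀ i j, i ≠ j → Equiv.Perm.Disjoint (τ i) (τ j))
    (s : Finset (Fin k)) (z : Fin k → ℤ) : Equiv.Perm (Fin n) :=
  s.noncommProd (fun i => τ i ^ z i)
    (fun a _ b _ hab => Commute.zpow_zpow ((hdisj a b hab).commute) _ _)

/-- The subgroup `H_σ = { x ∈ S_{X_σ} : xσx⁻¹ = σ^z for some integer z }`, as a set. -/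
def Hgrp {n : ℕ} (σ : Equiv.Perm (Fin n)) : Set (Equiv.Perm (Fin n)) :=
  {x | x.support ⊆ σ.support ∧ ∃ z : ℤ, x * σ * x⁻¹ = σ ^ z}

set_option linter.unusedSectionVars false
set_option linter.unnecessarySeqFocus false
set_option maxHeartbeats 1000000

theorem Equiv.Perm.inv_apply_self {α : Type*} (f : Perm α) (x : α) : f⁻¹ (f x) = x :=
  f.symm_apply_apply x

theorem Equiv.Perm.apply_inv_self {α : Type*} (f : Perm α) (x : α) : f (f⁻¹ x) = x :=
  f.apply_symm_apply x

namespace DihAux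


variable {α : Type*} [DecidableEq α] [Fintype α]

theorem list_prod_apply_eq_self {l : List (Perm α)} {x : α} (h : ∀ g ∈ l, g x = x) :
    l.prod x = x := by
  induction l with
  | nil => simp
  | cons a t ih =>
    simp only [List.prod_cons, Perm.mul_apply]
    rw [ih fun g hg => h g (List.mem_cons_of_mem a hg), h a List.mem_cons_self]

theorem list_prod_apply_eq {l : List (Perm α)} (hp : l.Pairwise Perm.Disjoint) {g : Perm α}
    (hg : g ∈ l) {x : α} (hx : g x ≠ x) : l.prod x = g x := by
  induction l with
  | nil => simp at hg
  | cons a t ih =>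
    rw [List.pairwise_cons] at hp
    rcases List.mem_cons.mp hg with rfl | hgt
    · have : t.prod x = x := list_prod_apply_eq_self fun b hb =>
        ((hp.1 b hb) x).resolve_left hx
      simp [Perm.mul_apply, this]
    · have h1 : t.prod x = g x := ih hp.2 hgt
      have hgx : g (g x) ≠ g x := fun h => hx (g.injective h)
      have : a (g x) = g x := ((hp.1 g hgt) (g x)).resolve_right hgx
      simp [Perm.mul_apply, h1, this]

theorem conj_list_prod (ρ : Perm α) (l : List (Perm α)) :
    ρ * l.prod * ρ⁻¹ = (l.map fun g => ρ * g * ρ⁻¹).prod := by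
  induction l with
  | nil => simp
  | cons a t ih =>
    simp only [List.prod_cons, List.map_cons, ← ih]
    group

theorem mem_of_apply_mem {f : Perm α} {s : Finset α} (hf : f.support ⊆ s) {x : α} (hx : x ∈ s) :
    f x ∈ s := by
  by_cases h : f x = x
  · rwa [h]
  · exact hf (apply_mem_support.mpr (mem_support.mpr h))

section Fam
variable {L : ℕ} {S : Fin L → Finset α} {A : Fin L → Perm α}

theorem fam_pairwise (hS : ∀ i i', i ≠ i' → Disjoint (S i) (S i'))
    (hA : ∀ i, (A i).support ⊆ S i) : (List.ofFn A).Pairwise Perm.Disjoint := by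
  rw [List.pairwise_ofFn]
  intro i j hij
  rw [disjoint_iff_disjoint_support]
  exact Finset.disjoint_of_subset_left (hA i) (Finset.disjoint_of_subset_right (hA j)
    (hS i j (Fin.ne_of_lt hij)))

theorem fam_apply_mem (hS : ∀ i i', i ≠ i' → Disjoint (S i) (S i'))
    (hA : ∀ i, (A i).support ⊆ S i) {i : Fin L} {x : α} (hx : x ∈ S i) :
    (List.ofFn A).prod x = A i x := by
  by_cases h : A i x = x
  · rw [h]
    refine list_prod_apply_eq_self fun g hg => ?_
    obtain ⟨j, rfl⟩ := List.mem_ofFn.mp hg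
    by_cases hj : j = i
    · rwa [hj]
    · by_contra hc
      exact (Finset.disjoint_left.mp (hS j i hj)) (hA j (mem_support.mpr hc)) hx
  · exact list_prod_apply_eq (fam_pairwise hS hA) (List.mem_ofFn.mpr ⟨i, rfl⟩) h

theorem fam_apply_of_forall_not_mem (hA : ∀ i, (A i).support ⊆ S i) {x : α}
    (hx : ∀ i, x ∉ S i) : (List.ofFn A).prod x = x := by
  refine list_prod_apply_eq_self fun g hg => ?_
  obtain ⟨j, rfl⟩ := List.mem_ofFn.mp hg
  by_contra hc
  exact hx j (hA j (mem_support.mpr hc))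

theorem fam_unique (hS : ∀ i i', i ≠ i' → Disjoint (S i) (S i'))
    (hA : ∀ i, (A i).support ⊆ S i) {B : Fin L → Perm α} (hB : ∀ i, (B i).support ⊆ S i)
    (h : (List.ofFn A).prod = (List.ofFn B).prod) : A = B := by
  funext i
  ext x
  by_cases hx : x ∈ S i
  · rw [← fam_apply_mem hS hA hx, ← fam_apply_mem hS hB hx, h]
  · have h1 : A i x = x := by
      by_contra hc; exact hx (hA i (mem_support.mpr hc))
    have h2 : B i x = x := by
      by_contra hc; exact hx (hB i (mem_support.mpr hc))
    rw [h1, h2]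

theorem fam_prod_inv (hS : ∀ i i', i ≠ i' → Disjoint (S i) (S i'))
    (hA : ∀ i, (A i).support ⊆ S i) :
    (List.ofFn fun i => (A i)⁻¹).prod = ((List.ofFn A).prod)⁻¹ := by
  have hA' : ∀ i, ((A i)⁻¹).support ⊆ S i := fun i => by
    rw [Equiv.Perm.support_inv]; exact hA i
  rw [eq_inv_iff_mul_eq_one]
  ext x
  simp only [Perm.mul_apply, Perm.one_apply]
  by_cases hx : ∃ i, x ∈ S i
  · obtain ⟨i, hi⟩ := hx
    rw [fam_apply_mem hS hA hi, fam_apply_mem hS hA' (mem_of_apply_mem (hA i) hi)]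
    simp
  · push_neg at hx
    rw [fam_apply_of_forall_not_mem hA hx, fam_apply_of_forall_not_mem hA' hx]

theorem fam_prod_sq (hS : ∀ i i', i ≠ i' → Disjoint (S i) (S i'))
    (hA : ∀ i, (A i).support ⊆ S i) :
    (List.ofFn fun i => (A i) ^ 2).prod = ((List.ofFn A).prod) ^ 2 := by
  have hA2 : ∀ i, ((A i) ^ 2).support ⊆ S i := fun i => (support_pow_le (A i) 2).trans (hA i)
  ext x
  rw [sq]
  simp only [Perm.mul_apply]
  by_cases hx : ∃ i, x ∈ S i
  · obtain ⟨i, hi⟩ := hx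
    rw [fam_apply_mem hS hA hi, fam_apply_mem hS hA (mem_of_apply_mem (hA i) hi),
      fam_apply_mem hS hA2 hi]
    simp [sq]
  · push_neg at hx
    rw [fam_apply_of_forall_not_mem hA hx, fam_apply_of_forall_not_mem hA hx,
      fam_apply_of_forall_not_mem hA2 hx]

theorem fam_prod_eq_one (hS : ∀ i i', i ≠ i' → Disjoint (S i) (S i'))
    (hA : ∀ i, (A i).support ⊆ S i) (h : (List.ofFn A).prod = 1) : ∀ i, A i = 1 := by
  have := fam_unique hS hA (B := fun _ => 1) (by simp) (by simpa using h)
  exact fun i => congrFun this i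

theorem fam_conj {ρ : Perm α} :
    ρ * (List.ofFn A).prod * ρ⁻¹ = (List.ofFn fun i => ρ * A i * ρ⁻¹).prod := by
  rw [conj_list_prod, List.map_ofFn]
  rfl

end Fam


/-- The dihedral group is generated by `r 1` and `sr 0`. -/
theorem dihedral_closure_eq_top (m : ℕ) :
    Subgroup.closure ({DihedralGroup.r 1, DihedralGroup.sr 0} : Set (DihedralGroup m)) = ⊤ := by
  rw [Subgroup.eq_top_iff']
  have hr1 : DihedralGroup.r (1 : ZMod m) ∈ Subgroup.closure
      ({DihedralGroup.r 1, DihedralGroup.sr 0} : Set (DihedralGroup m)) :=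
    Subgroup.subset_closure (by simp)
  have hs0 : DihedralGroup.sr (0 : ZMod m) ∈ Subgroup.closure
      ({DihedralGroup.r 1, DihedralGroup.sr 0} : Set (DihedralGroup m)) :=
    Subgroup.subset_closure (by simp)
  have hrinv : ∀ i : ZMod m, (DihedralGroup.r i)⁻¹ = DihedralGroup.r (-i) := by
    intro i
    rw [eq_comm, eq_inv_iff_mul_eq_one, DihedralGroup.r_mul_r, neg_add_cancel,
      DihedralGroup.one_def]
  have hri : ∀ i : ZMod m, DihedralGroup.r i ∈ Subgroup.closure
      ({DihedralGroup.r 1, DihedralGroup.sr 0} : Set (DihedralGroup m)) := by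
    intro i
    obtain ⟨z, rfl⟩ := ZMod.intCast_surjective i
    have h1 : ∀ v : ℕ, DihedralGroup.r ((v : ℤ) : ZMod m) ∈ Subgroup.closure
        ({DihedralGroup.r 1, DihedralGroup.sr 0} : Set (DihedralGroup m)) := by
      intro v
      induction v with
      | zero => simpa [DihedralGroup.one_def.symm] using Subgroup.one_mem _
      | succ v ih =>
        have : DihedralGroup.r (((v : ℤ) : ZMod m)) * DihedralGroup.r 1 =
            DihedralGroup.r (((v + 1 : ℕ) : ℤ) : ZMod m) := by
          rw [DihedralGroup.r_mul_r]; push_cast; ring_nf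
        exact this ▸ Subgroup.mul_mem _ ih hr1
    rcases z with v | v
    · exact h1 v
    · have : DihedralGroup.r ((Int.negSucc v : ZMod m)) =
          (DihedralGroup.r (((v + 1 : ℕ) : ℤ) : ZMod m))⁻¹ := by
        rw [hrinv]
        congr 1
        push_cast [Int.negSucc_eq]
        ring
      rw [this]
      exact Subgroup.inv_mem _ (h1 (v + 1))
  intro x
  cases x with
  | r i => exact hri i
  | sr i =>
    have : DihedralGroup.sr (0 : ZMod m) * DihedralGroup.r i = DihedralGroup.sr i := by
      rw [DihedralGroup.sr_mul_r, zero_add]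
    exact this ▸ Subgroup.mul_mem _ hs0 (hri i)

theorem dihedral_hom_ext {m : ℕ} {G : Type*} [Group G] {f g : DihedralGroup m →* G}
    (h1 : f (DihedralGroup.r 1) = g (DihedralGroup.r 1))
    (h2 : f (DihedralGroup.sr 0) = g (DihedralGroup.sr 0)) : f = g := by
  refine MonoidHom.eq_of_eqOn_dense (dihedral_closure_eq_top m) ?_
  intro x hx
  rcases hx with rfl | hx
  · exact h1
  · rw [Set.mem_singleton_iff] at hx
    subst hx
    exact h2


variable {α : Type*} [DecidableEq α] [Fintype α]

/-- If two conjugate permutations are both supported in `F`, there is a conjugating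
permutation supported in `F`. -/
theorem exists_conj_supported {F : Finset α} {f g : Perm α} (hf : f.support ⊆ F)
    (hg : g.support ⊆ F) (h : IsConj f g) : ∃ c : Perm α, c.support ⊆ F ∧ c * f * c⁻¹ = g := by
  obtain ⟨c₀, hc₀⟩ := isConj_iff.mp h
  have hsemi : ∀ x, c₀ (f x) = g (c₀ x) := by
    intro x
    have := congrFun (congrArg (fun p : Perm α => (p : α → α)) hc₀) (c₀ x)
    simp only [Perm.mul_apply] at this
    simp at this
    rw [this]
  have hmem : ∀ x ∈ f.support, c₀ x ∈ g.support := by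
    intro x hx
    rw [mem_support] at hx ⊢
    rw [← hsemi x]
    intro hcon
    exact hx (c₀.injective hcon)
  have hmem' : ∀ x ∈ g.support, c₀⁻¹ x ∈ f.support := by
    intro x hx
    rw [mem_support] at hx ⊢
    intro hcon
    apply hx
    have := hsemi (c₀⁻¹ x)
    rw [hcon] at this
    simp at this
    rw [← this]
  -- the equivalence between the two support-subsets of F
  let e : {y : {x // x ∈ F} // (y : α) ∈ f.support} ≃ {y : {x // x ∈ F} // (y : α) ∈ g.support} :=
    { toFun := fun y => ⟨⟨c₀ y, hg (hmem _ y.2)⟩, hmem _ y.2⟩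
      invFun := fun y => ⟨⟨c₀⁻¹ y, hf (hmem' _ y.2)⟩, hmem' _ y.2⟩
      left_inv := fun y => by
        ext; simp
      right_inv := fun y => by
        ext; simp }
  let w : Perm {x // x ∈ F} := e.extendSubtype
  refine ⟨Equiv.Perm.ofSubtype w, ?_, ?_⟩
  · intro x hx
    rw [mem_support] at hx
    by_contra hxF
    exact hx (Equiv.Perm.ofSubtype_apply_of_not_mem w hxF)
  · have key : ∀ x, (Equiv.Perm.ofSubtype w) (f x) = g ((Equiv.Perm.ofSubtype w) x) := by
      intro x
      by_cases hx : x ∈ f.support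
      · have hfx : f x ∈ f.support := apply_mem_support.mpr hx
        have hxF : x ∈ F := hf hx
        have hfxF : f x ∈ F := hf hfx
        rw [Equiv.Perm.ofSubtype_apply_of_mem w hfxF, Equiv.Perm.ofSubtype_apply_of_mem w hxF]
        rw [Equiv.extendSubtype_apply_of_mem e _ hfx, Equiv.extendSubtype_apply_of_mem e _ hx]
        simp only [Equiv.coe_fn_mk, e]
        exact hsemi x
      · have hfixed : f x = x := by rwa [← notMem_support]
        rw [hfixed]
        by_cases hxF : x ∈ F
        · rw [Equiv.Perm.ofSubtype_apply_of_mem w hxF]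
          have : ((w ⟨x, hxF⟩ : {x // x ∈ F}) : α) ∉ g.support :=
            Equiv.extendSubtype_not_mem e _ hx
          rw [notMem_support] at this
          rw [this]
        · rw [Equiv.Perm.ofSubtype_apply_of_not_mem w hxF]
          have : x ∉ g.support := fun hc => hxF (hg hc)
          rw [notMem_support] at this
          rw [this]
    have : Equiv.Perm.ofSubtype w * f = g * Equiv.Perm.ofSubtype w := by
      ext x; simpa [Perm.mul_apply] using key x
    rw [this]
    group

/-- Given finsets `A B ⊆ C` with `|A| = |B|`, there is a permutation supported in `C`
mapping `A` into `B` and `C \ A` into `C \ B`. -/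
theorem exists_perm_mapsto {A B C : Finset α} (hAC : A ⊆ C) (hBC : B ⊆ C)
    (hcard : A.card = B.card) :
    ∃ w : Perm α, w.support ⊆ C ∧ (∀ x ∈ A, w x ∈ B) ∧
      (∀ x ∈ C, x ∉ A → w x ∈ C ∧ w x ∉ B) := by
  classical
  have eA : {y : {x // x ∈ C} // (y : α) ∈ A} ≃ {x // x ∈ A} :=
    Equiv.subtypeSubtypeEquivSubtype (fun {x} hx => hAC hx)
  have eB : {y : {x // x ∈ C} // (y : α) ∈ B} ≃ {x // x ∈ B} :=
    Equiv.subtypeSubtypeEquivSubtype (fun {x} hx => hBC hx)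
  have u : {x // x ∈ A} ≃ {x // x ∈ B} := by
    apply Fintype.equivOfCardEq
    simp [Fintype.card_coe, hcard]
  let e : {y : {x // x ∈ C} // (y : α) ∈ A} ≃ {y : {x // x ∈ C} // (y : α) ∈ B} :=
    (eA.trans u).trans eB.symm
  let w0 : Perm {x // x ∈ C} := e.extendSubtype
  refine ⟨Equiv.Perm.ofSubtype w0, ?_, ?_, ?_⟩
  · intro x hx
    rw [mem_support] at hx
    by_contra hxC
    exact hx (Equiv.Perm.ofSubtype_apply_of_not_mem w0 hxC)
  · intro x hx
    have hxC : x ∈ C := hAC hx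
    rw [Equiv.Perm.ofSubtype_apply_of_mem w0 hxC]
    exact Equiv.extendSubtype_mem e _ hx
  · intro x hxC hxA
    rw [Equiv.Perm.ofSubtype_apply_of_mem w0 hxC]
    exact ⟨Subtype.coe_prop _, Equiv.extendSubtype_not_mem e _ hxA⟩

/-- A permutation whose support consists of fixed points of `g` commutes with `g`. -/
theorem commute_of_support_subset_fixed {w g : Perm α}
    (h : ∀ x ∈ w.support, g x = x) : w * g = g * w := by
  ext x
  simp only [Perm.mul_apply]
  by_cases hx : x ∈ w.support
  · rw [h x hx, h (w x) (apply_mem_support.mpr hx)]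
  · rw [notMem_support.mp hx]
    by_cases hgx : g x ∈ w.support
    · exfalso
      have := h _ hgx
      have hx' : g x = x := g.injective this
      rw [hx'] at hgx
      exact hx hgx
    · rw [notMem_support.mp hgx]



section Ev
variable {d : ℕ} [NeZero d]

/-- `Ev v` means `v` is twice something in `ZMod d`. -/
def Ev (v : ZMod d) : Prop := ∃ u : ZMod d, u + u = v

instance (v : ZMod d) : Decidable (Ev v) := by unfold Ev; infer_instance

theorem ev_zero : Ev (0 : ZMod d) := ⟨0, by ring⟩

theorem ev_sub_ev {x y : ZMod d} (hx : Ev x) (hy : Ev y) : Ev (x - y) := by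
  obtain ⟨u, rfl⟩ := hx; obtain ⟨v, rfl⟩ := hy
  exact ⟨u - v, by ring⟩

theorem ev_intCast {z : ℤ} (h : Even z) : Ev ((z : ZMod d)) := by
  obtain ⟨w, rfl⟩ := h
  exact ⟨(w : ZMod d), by push_cast; ring⟩

theorem ev_natCast {v : ℕ} (h : Even v) : Ev ((v : ZMod d)) := by
  obtain ⟨w, rfl⟩ := h
  exact ⟨(w : ZMod d), by push_cast; ring⟩

theorem not_ev_sub_not_ev {x y : ZMod d} (hx : ¬ Ev x) (hy : ¬ Ev y) : Ev (x - y) := by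
  have hvx : ¬ Even (x.val) := fun h => hx (by
    have := ev_natCast (d := d) h
    rwa [ZMod.natCast_val, ZMod.cast_id] at this)
  have hvy : ¬ Even (y.val) := fun h => hy (by
    have := ev_natCast (d := d) h
    rwa [ZMod.natCast_val, ZMod.cast_id] at this)
  have : x - y = (((x.val : ℤ) - (y.val : ℤ) : ℤ) : ZMod d) := by
    rw [Int.cast_sub, Int.cast_natCast, Int.cast_natCast, ZMod.natCast_val, ZMod.cast_id,
      ZMod.natCast_val, ZMod.cast_id]
  rw [this]
  apply ev_intCast
  rw [Int.even_sub]
  simp only [Int.even_coe_nat]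
  exact iff_of_false hvx hvy

/-- number of solutions of `a + a = v` equals the number of 2-torsion points, if `Ev v`. -/
theorem card_sol_eq {v : ZMod d} (h : Ev v) :
    (univ.filter fun a : ZMod d => a + a = v).card =
      (univ.filter fun a : ZMod d => a + a = 0).card := by
  obtain ⟨u, rfl⟩ := h
  apply Finset.card_bij' (fun a _ => a - u) (fun b _ => b + u)
  · intro a ha
    simp only [mem_filter, mem_univ, true_and] at ha ⊢
    linear_combination ha
  · intro b hb
    simp only [mem_filter, mem_univ, true_and] at hb ⊢
    linear_combination hb
  · intro a _; ring
  · intro b _; ring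

theorem card_sol_pos : 0 < (univ.filter fun a : ZMod d => a + a = 0).card := by
  apply Finset.card_pos.mpr
  exact ⟨0, by simp⟩

theorem card_sol_eq_zero {v : ZMod d} (h : ¬ Ev v) :
    (univ.filter fun a : ZMod d => a + a = v).card = 0 := by
  rw [Finset.card_eq_zero, Finset.filter_eq_empty_iff]
  intro a _
  exact fun hc => h ⟨a, hc⟩

end Ev


section PermProd
variable {k d : ℕ} [NeZero d]

/-- "reflection-type" permutation of `Fin k × ZMod d`. -/
def Qp (g : Perm (Fin k)) (c : Fin k → ZMod d) : Perm (Fin k × ZMod d) where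
  toFun p := (g p.1, c p.1 - p.2)
  invFun p := (g⁻¹ p.1, c (g⁻¹ p.1) - p.2)
  left_inv p := by simp
  right_inv p := by simp

/-- "rotation-type" permutation of `Fin k × ZMod d`. -/
def Cp (h : Perm (Fin k)) (t : Fin k → ZMod d) : Perm (Fin k × ZMod d) where
  toFun p := (h p.1, p.2 + t p.1)
  invFun p := (h⁻¹ p.1, p.2 - t (h⁻¹ p.1))
  left_inv p := by simp
  right_inv p := by simp

@[simp] theorem Qp_apply (g : Perm (Fin k)) (c : Fin k → ZMod d) (p : Fin k × ZMod d) :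
    Qp g c p = (g p.1, c p.1 - p.2) := rfl

@[simp] theorem Cp_apply (h : Perm (Fin k)) (t : Fin k → ZMod d) (p : Fin k × ZMod d) :
    Cp h t p = (h p.1, p.2 + t p.1) := rfl

theorem Cp_one : Cp (1 : Perm (Fin k)) (fun _ => (0 : ZMod d)) = 1 := by
  ext p : 1 <;> simp

theorem Cp_mul_Cp (h h' : Perm (Fin k)) (t t' : Fin k → ZMod d) :
    Cp h t * Cp h' t' = Cp (h * h') (fun j => t' j + t (h' j)) := by
  ext p : 1 <;> simp [Perm.mul_apply, add_assoc]

theorem Cp_mul_Qp (h g : Perm (Fin k)) (t c : Fin k → ZMod d) :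
    Cp h t * Qp g c = Qp (h * g) (fun j => c j + t (g j)) := by
  ext p : 1 <;> simp [Perm.mul_apply] <;> ring

theorem Qp_mul_Cp (g h : Perm (Fin k)) (c t : Fin k → ZMod d) :
    Qp g c * Cp h t = Qp (g * h) (fun j => c (h j) - t j) := by
  ext p : 1 <;> simp [Perm.mul_apply] <;> ring

theorem Qp_mul_Qp (g g' : Perm (Fin k)) (c c' : Fin k → ZMod d) :
    Qp g c * Qp g' c' = Cp (g * g') (fun j => c (g' j) - c' j) := by
  ext p : 1 <;> simp [Perm.mul_apply] <;> ring

theorem Cp_inv (h : Perm (Fin k)) (t : Fin k → ZMod d) :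
    (Cp h t)⁻¹ = Cp h⁻¹ (fun j => - t (h⁻¹ j)) := by
  rw [eq_comm]
  apply eq_inv_of_mul_eq_one_left
  rw [Cp_mul_Cp]
  rw [show h⁻¹ * h = 1 by group]
  rw [show (fun j => t j + -t (h⁻¹ (h j))) = fun _ => (0:ZMod d) by
    funext j; simp]
  exact Cp_one

/-- The key conjugation computation. -/
theorem Cp_conj_Qp (h g : Perm (Fin k)) (t c : Fin k → ZMod d) :
    Cp h t * Qp g c * (Cp h t)⁻¹ =
      Qp (h * g * h⁻¹) (fun j => c (h⁻¹ j) + t (g (h⁻¹ j)) + t (h⁻¹ j)) := by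
  rw [Cp_inv, Cp_mul_Qp, Qp_mul_Cp]
  congr 1
  funext j
  ring

/-- the "shift" permutation, image of `σ`. -/
def Sp : Perm (Fin k × ZMod d) := Cp 1 (fun _ => (1 : ZMod d))

@[simp] theorem Sp_apply (p : Fin k × ZMod d) : (Sp p : Fin k × ZMod d) = (p.1, p.2 + 1) := rfl

theorem Qp_ext {g g' : Perm (Fin k)} {c c' : Fin k → ZMod d} (h : Qp g c = Qp g' c') :
    (∀ j, g j = g' j) ∧ c = c' := by
  constructor
  · intro j
    have := congrArg (fun q : Perm (Fin k × ZMod d) => (q (j, 0)).1) h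
    simpa using this
  · funext j
    have := congrArg (fun q : Perm (Fin k × ZMod d) => (q (j, 0)).2) h
    simpa using this

/-- Structure of permutations anticommuting with the shift. -/
theorem Q_struct {Q : Perm (Fin k × ZMod d)} (hQ : Q * Sp = Sp⁻¹ * Q) :
    ∃ (g : Perm (Fin k)) (c : Fin k → ZMod d), Q = Qp g c := by
  set gf : Fin k → Fin k := fun j => (Q (j, 0)).1 with hgf
  set cf : Fin k → ZMod d := fun j => (Q (j, 0)).2 with hcf
  have happ : ∀ (j : Fin k) (a : ZMod d), Q (j, a) = (gf j, cf j - a) := by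
    have hnat : ∀ (v : ℕ) (j : Fin k), Q (j, (v : ZMod d)) = (gf j, cf j - (v : ZMod d)) := by
      intro v
      induction v with
      | zero => intro j; simp [hgf, hcf]
      | succ v ih =>
        intro j
        have h1 : ((v + 1 : ℕ) : ZMod d) = (v : ZMod d) + 1 := by push_cast; ring
        have h2 : Q (Sp (j, (v : ZMod d))) = Sp⁻¹ (Q (j, (v : ZMod d))) := by
          have := congrFun (congrArg (fun q : Perm (Fin k × ZMod d) => (q : _ → _)) hQ)
            ((j, (v : ZMod d)))
          simpa [Perm.mul_apply] using this
        have h3 : (Sp (j, (v : ZMod d)) : Fin k × ZMod d) = (j, (v : ZMod d) + 1) := by simp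
        rw [h1, ← h3, h2, ih j]
        have : (Sp : Perm (Fin k × ZMod d))⁻¹ (gf j, cf j - (v : ZMod d)) =
            (gf j, cf j - (v : ZMod d) - 1) := by
          apply (Equiv.symm_apply_eq _).mpr
          simp [Sp]
        rw [this]
        congr 1
        ring
    intro j a
    have : ((a.val : ℕ) : ZMod d) = a := by
      rw [ZMod.natCast_val, ZMod.cast_id]
    rw [← this, hnat]
  have hinj : Function.Injective gf := by
    intro j j' hj
    have h1 : Q (j, cf j - 0) = (gf j, 0) := by rw [happ]; simp
    have h2 : Q (j', cf j' - 0) = (gf j', 0) := by rw [happ]; simp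
    rw [hj] at h1
    have := Q.injective (h1.trans h2.symm)
    exact congrArg Prod.fst this
  have hbij : Function.Bijective gf := Finite.injective_iff_bijective.mp hinj
  refine ⟨Equiv.ofBijective gf hbij, cf, ?_⟩
  ext p : 1
  rw [show p = (p.1, p.2) from rfl, happ]
  simp [Equiv.ofBijective]

/-- Structure of permutations commuting with the shift. -/
theorem C_struct {R : Perm (Fin k × ZMod d)} (hR : R * Sp = Sp * R) :
    ∃ (h : Perm (Fin k)) (t : Fin k → ZMod d), R = Cp h t := by
  set hf : Fin k → Fin k := fun j => (R (j, 0)).1 with hhf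
  set tf : Fin k → ZMod d := fun j => (R (j, 0)).2 with htf
  have happ : ∀ (j : Fin k) (a : ZMod d), R (j, a) = (hf j, tf j + a) := by
    have hnat : ∀ (v : ℕ) (j : Fin k), R (j, (v : ZMod d)) = (hf j, tf j + (v : ZMod d)) := by
      intro v
      induction v with
      | zero => intro j; simp [hhf, htf]
      | succ v ih =>
        intro j
        have h1 : ((v + 1 : ℕ) : ZMod d) = (v : ZMod d) + 1 := by push_cast; ring
        have h2 : R (Sp (j, (v : ZMod d))) = Sp (R (j, (v : ZMod d))) := by
          have := congrFun (congrArg (fun q : Perm (Fin k × ZMod d) => (q : _ → _)) hR)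
            ((j, (v : ZMod d)))
          simpa [Perm.mul_apply] using this
        have h3 : (Sp (j, (v : ZMod d)) : Fin k × ZMod d) = (j, (v : ZMod d) + 1) := by simp
        rw [h1, ← h3, h2, ih j]
        simp only [Sp_apply]
        congr 1
        ring
    intro j a
    have : ((a.val : ℕ) : ZMod d) = a := by
      rw [ZMod.natCast_val, ZMod.cast_id]
    rw [← this, hnat]
  have hinj : Function.Injective hf := by
    intro j j' hj
    have h1 : R (j, 0) = (hf j, tf j) := by rw [happ]; simp
    have h2 : R (j', tf j - tf j') = (hf j', tf j) := by rw [happ]; congr 1; ring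
    rw [hj] at h1
    have := R.injective (h1.trans h2.symm)
    exact congrArg Prod.fst this
  have hbij : Function.Bijective hf := Finite.injective_iff_bijective.mp hinj
  refine ⟨Equiv.ofBijective hf hbij, tf, ?_⟩
  ext p : 1
  rw [show p = (p.1, p.2) from rfl, happ]
  simp [Equiv.ofBijective, add_comm]

end PermProd
section Count
variable {k d : ℕ} [NeZero d]

theorem Qp_fixed_count (g : Perm (Fin k)) (c : Fin k → ZMod d) :
    (univ.filter fun p : Fin k × ZMod d => Qp g c p = p).card =
      (univ.filter fun a : ZMod d => a + a = 0).card *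
        (univ.filter fun j : Fin k => g j = j ∧ Ev (c j)).card := by
  rw [Finset.card_eq_sum_card_fiberwise (f := Prod.fst) (t := univ) (fun x _ => mem_univ _)]
  have hfiber : ∀ j : Fin k,
      ((univ.filter fun p : Fin k × ZMod d => Qp g c p = p).filter fun p => p.1 = j).card =
        (univ.filter fun a : ZMod d => g j = j ∧ a + a = c j).card := by
    intro j
    apply Finset.card_nbij' (fun p => p.2) (fun a => (j, a))
    · intro p hp
      simp only [Finset.mem_coe, mem_filter, mem_univ, true_and] at hp ⊢
      obtain ⟨hfix, hfst⟩ := hp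
      subst hfst
      have h1 : g p.1 = p.1 := congrArg Prod.fst hfix
      have h2 : c p.1 - p.2 = p.2 := congrArg Prod.snd hfix
      exact ⟨h1, by linear_combination -h2⟩
    · intro a ha
      simp only [Finset.mem_coe, mem_filter, mem_univ, true_and] at ha ⊢
      obtain ⟨h1, h2⟩ := ha
      refine ⟨?_, trivial⟩
      have he : Qp g c (j, a) = (g j, c j - a) := rfl
      rw [he, h1]
      have : c j - a = a := by linear_combination -h2
      rw [this]
    · intro p hp
      simp only [Finset.mem_coe, mem_filter, mem_univ, true_and] at hp
      rw [← hp.2]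
    · intro a _
      rfl
  rw [Finset.sum_congr rfl fun j _ => hfiber j]
  have hval : ∀ j : Fin k, (univ.filter fun a : ZMod d => g j = j ∧ a + a = c j).card =
      if (g j = j ∧ Ev (c j)) then (univ.filter fun a : ZMod d => a + a = 0).card else 0 := by
    intro j
    by_cases hgj : g j = j
    · simp only [hgj, true_and]
      by_cases hev : Ev (c j)
      · rw [if_pos hev, ← card_sol_eq hev]
      · rw [if_neg hev, ← card_sol_eq_zero hev]
    · simp [hgj]
  rw [Finset.sum_congr rfl fun j _ => hval j, ← Finset.sum_filter, Finset.sum_const,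
    smul_eq_mul, mul_comm]

end Count

section Block
variable {α : Type*} [DecidableEq α] [Fintype α] {k d : ℕ} [NeZero d]

theorem maps_into_iff {f : Perm α} {s : Finset α} (h : ∀ x ∈ s, f x ∈ s) :
    ∀ x, x ∈ s ↔ f x ∈ s := by
  have himg : s.image f = s := by
    apply Finset.eq_of_subset_of_card_le
    · intro y hy
      obtain ⟨x, hx, rfl⟩ := Finset.mem_image.mp hy
      exact h x hx
    · rw [Finset.card_image_of_injective s f.injective]
  intro x
  constructor
  · exact h x
  · intro hfx
    rw [← himg] at hfx
    obtain ⟨y, hy, hxy⟩ := Finset.mem_image.mp hfx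
    rwa [← f.injective hxy]

theorem support_subset_iff_mem {f : Perm α} {s : Finset α} (h : f.support ⊆ s) :
    ∀ x, x ∈ s ↔ f x ∈ s := by
  intro x
  refine maps_into_iff (fun y hy => ?_) x
  by_cases hfy : f y = y
  · rwa [hfy]
  · exact h (apply_mem_support.mpr (mem_support.mpr hfy))

structure BlockSetup (α : Type*) [DecidableEq α] [Fintype α] (k d : ℕ) : Type _ where
  τ : Fin k → Perm α
  hd2 : 2 ≤ d
  hcyc : ∀ j, (τ j).IsCycle
  hlen : ∀ j, (τ j).support.card = d
  hdisj : ∀ j j', j ≠ j' → (τ j).Disjoint (τ j')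

namespace BlockSetup
variable {α : Type*} [DecidableEq α] [Fintype α] {k d : ℕ} [NeZero d]
variable (B : BlockSetup α k d)

def sigma : Perm α := (List.ofFn B.τ).prod

theorem hSdisj : ∀ j j' : Fin k, j ≠ j' →
    Disjoint (B.τ j).support (B.τ j').support := fun j j' h =>
  disjoint_iff_disjoint_support.mp (B.hdisj j j' h)

theorem href : ∀ j : Fin k, (B.τ j).support ⊆ (fun j => (B.τ j).support) j :=
  fun _ => le_refl _

theorem sigma_apply_mem {j : Fin k} {x : α} (hx : x ∈ (B.τ j).support) :
    B.sigma x = B.τ j x :=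
  fam_apply_mem B.hSdisj B.href hx

theorem supp_tau_subset (j : Fin k) : (B.τ j).support ⊆ B.sigma.support := by
  intro x hx
  rw [mem_support, B.sigma_apply_mem hx]
  exact mem_support.mp hx

theorem mem_sigma_support {x : α} (hx : x ∈ B.sigma.support) :
    ∃ j, x ∈ (B.τ j).support := by
  by_contra hc
  push_neg at hc
  have : B.sigma x = x := fam_apply_of_forall_not_mem B.href hc
  exact mem_support.mp hx this

theorem sigma_support : B.sigma.support = univ.biUnion (fun j => (B.τ j).support) := by
  ext x
  simp only [Finset.mem_biUnion, mem_univ, true_and]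
  constructor
  · exact fun h => B.mem_sigma_support h
  · rintro ⟨j, hj⟩
    exact B.supp_tau_subset j hj

theorem card_sigma_support : B.sigma.support.card = k * d := by
  rw [B.sigma_support, Finset.card_biUnion]
  · simp [B.hlen, mul_comm]
  · intro j _ j' _ h
    exact B.hSdisj j j' h

theorem orderOf_tau (j : Fin k) : orderOf (B.τ j) = d := by
  rw [(B.hcyc j).orderOf, B.hlen]

theorem pow_mem_support {j : Fin k} {x : α} (hx : x ∈ (B.τ j).support) (v : ℕ) :
    (B.τ j ^ v) x ∈ (B.τ j).support := by
  induction v with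
  | zero => simpa using hx
  | succ v ih =>
    rw [pow_succ', Perm.mul_apply]
    exact apply_mem_support.mpr ih

theorem cycle_pow_fix {j : Fin k} {x : α} (hx : x ∈ (B.τ j).support) {v : ℕ} (hv : v < d)
    (h : (B.τ j ^ v) x = x) : v = 0 := by
  have h1 : (B.τ j) ^ v = 1 :=
    ((B.hcyc j).pow_eq_one_iff' (mem_support.mp hx)).mpr h
  have h2 : d ∣ v := by
    rw [← B.orderOf_tau j]
    exact orderOf_dvd_of_pow_eq_one h1
  exact Nat.eq_zero_of_dvd_of_lt h2 hv

noncomputable def bpt (j : Fin k) : α :=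
  (Finset.card_pos.mp (by rw [B.hlen]; have := B.hd2; omega) :
    (B.τ j).support.Nonempty).choose

theorem bpt_mem (j : Fin k) : B.bpt j ∈ (B.τ j).support :=
  (Finset.card_pos.mp (by rw [B.hlen]; have := B.hd2; omega) :
    (B.τ j).support.Nonempty).choose_spec

noncomputable def emb (p : Fin k × ZMod d) : α := (B.τ p.1 ^ p.2.val) (B.bpt p.1)

theorem emb_mem_tau (p : Fin k × ZMod d) : B.emb p ∈ (B.τ p.1).support :=
  B.pow_mem_support (B.bpt_mem p.1) p.2.val

theorem emb_mem_sigma (p : Fin k × ZMod d) : B.emb p ∈ B.sigma.support :=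
  B.supp_tau_subset p.1 (B.emb_mem_tau p)

theorem emb_step (j : Fin k) (a : ZMod d) : B.τ j (B.emb (j, a)) = B.emb (j, a + 1) := by
  haveI : Fact (1 < d) := ⟨B.hd2⟩
  have h1 : (a + 1).val = (a.val + 1) % d := by
    rw [ZMod.val_add, ZMod.val_one]
  have h2 : (B.τ j ^ ((a.val + 1) % d)) = B.τ j ^ (a.val + 1) := by
    rw [pow_eq_pow_iff_modEq, B.orderOf_tau]
    exact Nat.mod_modEq _ _
  show B.τ j ((B.τ j ^ a.val) (B.bpt j)) = (B.τ j ^ (a+1).val) (B.bpt j)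
  rw [h1, h2, pow_succ', Perm.mul_apply]

theorem emb_inj : Function.Injective B.emb := by
  have key : ∀ (j : Fin k) (a a' : ZMod d), a'.val ≤ a.val →
      B.emb (j, a) = B.emb (j, a') → a = a' := by
    intro j a a' hle h
    have h2 : (B.τ j ^ (a.val - a'.val)) ((B.τ j ^ a'.val) (B.bpt j)) =
        (B.τ j ^ a'.val) (B.bpt j) := by
      have : B.τ j ^ (a.val - a'.val) * B.τ j ^ a'.val = B.τ j ^ a.val := by
        rw [← pow_add]
        congr 1
        omega
      rw [← Perm.mul_apply, this]
      exact h
    have hv : a.val - a'.val < d := by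
      have := ZMod.val_lt a
      omega
    have h0 := B.cycle_pow_fix (B.pow_mem_support (B.bpt_mem j) a'.val) hv h2
    have : a.val = a'.val := by omega
    have ha : ((a.val : ℕ) : ZMod d) = a := by rw [ZMod.natCast_val, ZMod.cast_id]
    have ha' : ((a'.val : ℕ) : ZMod d) = a' := by rw [ZMod.natCast_val, ZMod.cast_id]
    rw [← ha, ← ha', this]
  intro p q h
  have hfst : p.1 = q.1 := by
    by_contra hc
    have h1 := B.emb_mem_tau p
    have h2 := B.emb_mem_tau q
    rw [h] at h1
    exact (Finset.disjoint_left.mp (B.hSdisj p.1 q.1 hc)) h1 h2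
  obtain ⟨j, a⟩ := p
  obtain ⟨j', a'⟩ := q
  simp only at hfst
  subst hfst
  rcases le_total a'.val a.val with hle | hle
  · rw [key j a a' hle h]
  · rw [key j a' a hle h.symm]

theorem emb_block_surj {j : Fin k} {x : α} (hx : x ∈ (B.τ j).support) :
    ∃ a : ZMod d, B.emb (j, a) = x := by
  have hinj : Function.Injective (fun a : ZMod d =>
      (⟨B.emb (j, a), B.emb_mem_tau _⟩ : {y // y ∈ (B.τ j).support})) := by
    intro a a' h
    have h2 : B.emb (j, a) = B.emb (j, a') := congrArg Subtype.val h
    have h3 := B.emb_inj h2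
    exact (Prod.ext_iff.mp h3).2
  have hbij : Function.Bijective (fun a : ZMod d =>
      (⟨B.emb (j, a), B.emb_mem_tau _⟩ : {y // y ∈ (B.τ j).support})) := by
    rw [Fintype.bijective_iff_injective_and_card]
    refine ⟨hinj, ?_⟩
    rw [ZMod.card, Fintype.card_coe, B.hlen]
  obtain ⟨a, ha⟩ := hbij.2 ⟨x, hx⟩
  exact ⟨a, congrArg Subtype.val ha⟩

noncomputable def coords : (Fin k × ZMod d) ≃ {x // x ∈ B.sigma.support} :=
  Equiv.ofBijective (fun p => ⟨B.emb p, B.emb_mem_sigma p⟩) (by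
    rw [Fintype.bijective_iff_injective_and_card]
    constructor
    · intro p q h
      exact B.emb_inj (congrArg Subtype.val h)
    · rw [Fintype.card_prod, Fintype.card_fin, ZMod.card, Fintype.card_coe,
        B.card_sigma_support])

theorem coords_coe (p : Fin k × ZMod d) : (B.coords p : α) = B.emb p := rfl

noncomputable def lift : Perm (Fin k × ZMod d) →* Perm α :=
  Equiv.Perm.extendDomainHom B.coords

theorem lift_apply_emb (X : Perm (Fin k × ZMod d)) (p : Fin k × ZMod d) :
    B.lift X (B.emb p) = B.emb (X p) := by
  have := Equiv.Perm.extendDomain_apply_image (e := X) (f := B.coords) (a := p)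
  rw [B.coords_coe, B.coords_coe] at this
  exact this

theorem lift_apply_not_mem (X : Perm (Fin k × ZMod d)) {x : α} (hx : x ∉ B.sigma.support) :
    B.lift X x = x :=
  Equiv.Perm.extendDomain_apply_not_subtype X B.coords hx

theorem lift_support (X : Perm (Fin k × ZMod d)) : (B.lift X).support ⊆ B.sigma.support := by
  intro x hx
  rw [mem_support] at hx
  by_contra hc
  exact hx (B.lift_apply_not_mem X hc)

theorem emb_surj {x : α} (hx : x ∈ B.sigma.support) : ∃ p, B.emb p = x := by
  refine ⟨B.coords.symm ⟨x, hx⟩, ?_⟩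
  rw [← B.coords_coe, Equiv.apply_symm_apply]

theorem sigma_eq_lift : B.sigma = B.lift (Sp (k := k) (d := d)) := by
  ext x
  by_cases hx : x ∈ B.sigma.support
  · obtain ⟨p, rfl⟩ := B.emb_surj hx
    rw [B.lift_apply_emb]
    obtain ⟨j, a⟩ := p
    have h1 : (Sp (j, a) : Fin k × ZMod d) = (j, a + 1) := rfl
    rw [h1, ← B.emb_step, B.sigma_apply_mem (B.emb_mem_tau (j, a))]
  · rw [notMem_support.mp hx, B.lift_apply_not_mem _ hx]

theorem emb_S (p : Fin k × ZMod d) : B.sigma (B.emb p) = B.emb (Sp p) := by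
  rw [B.sigma_eq_lift, B.lift_apply_emb]

noncomputable def transf (ρ : Perm α) (h : ∀ x, x ∈ B.sigma.support ↔ ρ x ∈ B.sigma.support) :
    Perm (Fin k × ZMod d) :=
  (B.coords.symm).permCongr (ρ.subtypePerm fun x => (h x).symm)

theorem emb_transf (ρ : Perm α) (h : ∀ x, x ∈ B.sigma.support ↔ ρ x ∈ B.sigma.support)
    (p : Fin k × ZMod d) : B.emb (B.transf ρ h p) = ρ (B.emb p) := by
  unfold transf
  rw [Equiv.permCongr_apply, Equiv.symm_symm]
  rw [← B.coords_coe, Equiv.apply_symm_apply]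
  rfl

theorem lift_transf (ρ : Perm α) (hsub : ρ.support ⊆ B.sigma.support)
    (h : ∀ x, x ∈ B.sigma.support ↔ ρ x ∈ B.sigma.support) :
    B.lift (B.transf ρ h) = ρ := by
  ext x
  by_cases hx : x ∈ B.sigma.support
  · obtain ⟨p, rfl⟩ := B.emb_surj hx
    rw [B.lift_apply_emb, B.emb_transf]
  · rw [B.lift_apply_not_mem _ hx]
    by_contra hc
    exact hx (hsub (mem_support.mpr (fun hh => hc hh.symm)))

noncomputable def Qof (π : Perm α) (hsub : π.support ⊆ B.sigma.support) :
    Perm (Fin k × ZMod d) :=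
  B.transf π (support_subset_iff_mem hsub)

theorem emb_Qof (π : Perm α) (hsub : π.support ⊆ B.sigma.support) (p : Fin k × ZMod d) :
    B.emb (B.Qof π hsub p) = π (B.emb p) :=
  B.emb_transf π _ p

theorem lift_Qof (π : Perm α) (hsub : π.support ⊆ B.sigma.support) :
    B.lift (B.Qof π hsub) = π :=
  B.lift_transf π hsub _

theorem lift_injective : Function.Injective B.lift :=
  Equiv.Perm.extendDomainHom_injective B.coords

theorem Qof_rel (π : Perm α) (hsub : π.support ⊆ B.sigma.support)
    (hrel : π * B.sigma * π⁻¹ = B.sigma⁻¹) :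
    B.Qof π hsub * Sp = Sp⁻¹ * B.Qof π hsub := by
  apply B.lift_injective
  rw [map_mul, map_mul, B.lift_Qof]
  have h1 : B.lift Sp = B.sigma := B.sigma_eq_lift.symm
  have h2 : B.lift Sp⁻¹ = B.sigma⁻¹ := by rw [map_inv, h1]
  rw [h1, h2]
  have := hrel
  rw [mul_inv_eq_iff_eq_mul] at this
  rw [this]

theorem Qof_sq (π : Perm α) (hsub : π.support ⊆ B.sigma.support) (hsq : π * π = 1) :
    B.Qof π hsub * B.Qof π hsub = 1 := by
  apply B.lift_injective
  rw [map_mul, map_one, B.lift_Qof, hsq]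

theorem mapping_of (π : Perm α) (hsub : π.support ⊆ B.sigma.support)
    (g : Perm (Fin k)) (c : Fin k → ZMod d) (hQ : B.Qof π hsub = Qp g c) :
    ∀ j : Fin k, ∀ p ∈ (B.τ j).support, π p ∈ (B.τ (g j)).support := by
  intro j x hx
  obtain ⟨a, rfl⟩ := B.emb_block_surj hx
  rw [← B.emb_Qof π hsub, hQ]
  have : (Qp g c (j, a) : Fin k × ZMod d) = (g j, c j - a) := rfl
  rw [this]
  exact B.emb_mem_tau _

theorem g_unique (π : Perm α) (g₁ g₂ : Fin k → Fin k)
    (h₁ : ∀ j : Fin k, ∀ p ∈ (B.τ j).support, π p ∈ (B.τ (g₁ j)).support)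
    (h₂ : ∀ j : Fin k, ∀ p ∈ (B.τ j).support, π p ∈ (B.τ (g₂ j)).support) :
    ∀ j, g₁ j = g₂ j := by
  intro j
  by_contra hc
  have m1 := h₁ j _ (B.bpt_mem j)
  have m2 := h₂ j _ (B.bpt_mem j)
  exact (Finset.disjoint_left.mp (B.hSdisj _ _ hc)) m1 m2

theorem Cp_eq_one {h : Perm (Fin k)} {t : Fin k → ZMod d} (heq : Cp h t = 1) :
    (∀ j, h j = j) ∧ ∀ j, t j = 0 := by
  constructor
  · intro j
    have := congrArg (fun q : Perm (Fin k × ZMod d) => (q (j, 0)).1) heq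
    simpa using this
  · intro j
    have := congrArg (fun q : Perm (Fin k × ZMod d) => (q (j, 0)).2) heq
    simpa using this

theorem Qp_invol {g : Perm (Fin k)} {c : Fin k → ZMod d}
    (hsq : Qp g c * Qp g c = (1 : Perm (Fin k × ZMod d))) :
    (∀ j, g (g j) = j) ∧ ∀ j, c (g j) = c j := by
  rw [Qp_mul_Qp] at hsq
  obtain ⟨h1, h2⟩ := Cp_eq_one hsq
  constructor
  · intro j; exact h1 j
  · intro j
    have := h2 j
    have h3 : c (g j) - c j = 0 := this
    linear_combination h3

theorem card_support_coords (π : Perm α) (hsub : π.support ⊆ B.sigma.support) :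
    (univ.filter fun p : Fin k × ZMod d => B.Qof π hsub p = p).card + π.support.card = k * d := by
  have h1 : π.support.card = (B.Qof π hsub).support.card := by
    conv_lhs => rw [← B.lift_Qof π hsub]
    show ((B.Qof π hsub).extendDomain B.coords).support.card = _
    rw [Equiv.Perm.support_extend_domain, Finset.card_map]
  rw [h1]
  have h2 : (B.Qof π hsub).support =
      univ.filter fun p : Fin k × ZMod d => ¬ B.Qof π hsub p = p := by
    ext p; simp [mem_support]
  rw [h2, Finset.card_filter_add_card_filter_not]
  rw [Finset.card_univ, Fintype.card_prod, Fintype.card_fin, ZMod.card]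

theorem block_forward (π π' ρ : Perm α)
    (hπ : π.support ⊆ B.sigma.support) (hπ' : π'.support ⊆ B.sigma.support)
    (hrel : π * B.sigma * π⁻¹ = B.sigma⁻¹)
    (hρ : ∀ x ∈ B.sigma.support, ρ x ∈ B.sigma.support)
    (hρc : ρ * B.sigma = B.sigma * ρ)
    (hconj : ρ * π * ρ⁻¹ = π') :
    ∃ g g' : Perm (Fin k),
      (∀ j : Fin k, ∀ p ∈ (B.τ j).support, π p ∈ (B.τ (g j)).support) ∧
      (∀ j : Fin k, ∀ p ∈ (B.τ j).support, π' p ∈ (B.τ (g' j)).support) ∧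
      g.cycleType = g'.cycleType := by
  have hρσ : ρ * B.sigma * ρ⁻¹ = B.sigma := by
    rw [hρc]; group
  have hrel' : π' * B.sigma * π'⁻¹ = B.sigma⁻¹ := by
    rw [← hconj, ← hρσ]
    have : ∀ a b : Perm α, (ρ * a * ρ⁻¹) * (ρ * b * ρ⁻¹) * (ρ * a * ρ⁻¹)⁻¹
        = ρ * (a * b * a⁻¹) * ρ⁻¹ := by
      intro a b; group
    rw [this π B.sigma, hrel]
    group
  obtain ⟨g, c, hQ⟩ := Q_struct (B.Qof_rel π hπ hrel)
  obtain ⟨g', c', hQ'⟩ := Q_struct (B.Qof_rel π' hπ' hrel')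
  have hiffρ : ∀ x, x ∈ B.sigma.support ↔ ρ x ∈ B.sigma.support := maps_into_iff hρ
  set R := B.transf ρ hiffρ with hRdef
  have hRQ : R * B.Qof π hπ = B.Qof π' hπ' * R := by
    apply Equiv.ext
    intro p
    apply B.emb_inj
    rw [Perm.mul_apply, Perm.mul_apply]
    rw [B.emb_transf, B.emb_Qof, B.emb_Qof, B.emb_transf]
    have : ρ * π = π' * ρ := by rw [← hconj]; group
    have := congrFun (congrArg (fun q : Perm α => (q : α → α)) this) (B.emb p)
    simpa [Perm.mul_apply] using this
  have hRS : R * Sp = Sp * R := by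
    apply Equiv.ext
    intro p
    apply B.emb_inj
    rw [Perm.mul_apply, Perm.mul_apply]
    rw [B.emb_transf, ← B.emb_S, ← B.emb_S, B.emb_transf]
    have := congrFun (congrArg (fun q : Perm α => (q : α → α)) hρc) (B.emb p)
    simpa [Perm.mul_apply] using this
  obtain ⟨h, t, hR⟩ := C_struct hRS
  rw [hQ, hQ', hR] at hRQ
  rw [Cp_mul_Qp, Qp_mul_Cp] at hRQ
  have hkey : ∀ j, h (g j) = g' (h j) := fun j => (Qp_ext hRQ).1 j
  have hgconj : g' = h * g * h⁻¹ := by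
    ext j
    have := hkey (h⁻¹ j)
    simp only [Perm.mul_apply]
    rw [this]
    simp
  refine ⟨g, g', B.mapping_of π hπ g c hQ, B.mapping_of π' hπ' g' c' hQ', ?_⟩
  rw [hgconj, Equiv.Perm.cycleType_conj]

theorem block_backward (π π' : Perm α)
    (hπ : π.support ⊆ B.sigma.support) (hπ' : π'.support ⊆ B.sigma.support)
    (hrel : π * B.sigma * π⁻¹ = B.sigma⁻¹) (hrel' : π' * B.sigma * π'⁻¹ = B.sigma⁻¹)
    (hsq : π * π = 1) (hsq' : π' * π' = 1)
    (hsupp : π.support.card = π'.support.card)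
    (g0 g0' : Perm (Fin k))
    (hg0 : ∀ j : Fin k, ∀ p ∈ (B.τ j).support, π p ∈ (B.τ (g0 j)).support)
    (hg0' : ∀ j : Fin k, ∀ p ∈ (B.τ j).support, π' p ∈ (B.τ (g0' j)).support)
    (hgT : g0.cycleType = g0'.cycleType) :
    ∃ ρ : Perm α, ρ.support ⊆ B.sigma.support ∧ ρ * B.sigma * ρ⁻¹ = B.sigma ∧
      ρ * π * ρ⁻¹ = π' := by
  obtain ⟨g, c, hQ⟩ := Q_struct (B.Qof_rel π hπ hrel)
  obtain ⟨g', c', hQ'⟩ := Q_struct (B.Qof_rel π' hπ' hrel')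
  -- identify the abstract permutations with the canonical ones
  have hgg : g0 = g :=
    Equiv.ext (B.g_unique π g0 g hg0 (B.mapping_of π hπ g c hQ))
  have hgg' : g0' = g' :=
    Equiv.ext (B.g_unique π' g0' g' hg0' (B.mapping_of π' hπ' g' c' hQ'))
  rw [hgg, hgg'] at hgT
  -- involution data
  have hQsq : Qp g c * Qp g c = (1 : Perm (Fin k × ZMod d)) := by
    rw [← hQ]; exact B.Qof_sq π hπ hsq
  have hQsq' : Qp g' c' * Qp g' c' = (1 : Perm (Fin k × ZMod d)) := by
    rw [← hQ']; exact B.Qof_sq π' hπ' hsq'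
  obtain ⟨hginv, hcinv⟩ := Qp_invol hQsq
  obtain ⟨hginv', hcinv'⟩ := Qp_invol hQsq'
  -- counting : the fixed-point counts agree
  have hcount := B.card_support_coords π hπ
  have hcount' := B.card_support_coords π' hπ'
  rw [hQ] at hcount
  rw [hQ'] at hcount'
  have hfix : (univ.filter fun p : Fin k × ZMod d => Qp g c p = p).card =
      (univ.filter fun p : Fin k × ZMod d => Qp g' c' p = p).card := by omega
  rw [Qp_fixed_count, Qp_fixed_count] at hfix
  have hn2 : 0 < (univ.filter fun a : ZMod d => a + a = 0).card :=
    Finset.card_pos.mpr ⟨0, by simp⟩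
  have hE : (univ.filter fun j : Fin k => g j = j ∧ Ev (c j)).card =
      (univ.filter fun j : Fin k => g' j = j ∧ Ev (c' j)).card :=
    Nat.eq_of_mul_eq_mul_left hn2 hfix
  -- fixed point sets of g and g' have equal cardinality
  have hFcard : (univ.filter fun j : Fin k => g j = j).card =
      (univ.filter fun j : Fin k => g' j = j).card := by
    have h1 : g.support.card = g'.support.card := by
      rw [← Equiv.Perm.sum_cycleType, ← Equiv.Perm.sum_cycleType, hgT]
    have h2 : (univ.filter fun j : Fin k => g j = j).card + g.support.card = k := by
      have : g.support = univ.filter fun j : Fin k => ¬ g j = j := by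
        ext j; simp [mem_support]
      rw [this, Finset.card_filter_add_card_filter_not, Finset.card_univ,
        Fintype.card_fin]
    have h3 : (univ.filter fun j : Fin k => g' j = j).card + g'.support.card = k := by
      have : g'.support = univ.filter fun j : Fin k => ¬ g' j = j := by
        ext j; simp [mem_support]
      rw [this, Finset.card_filter_add_card_filter_not, Finset.card_univ,
        Fintype.card_fin]
    omega
  -- conjugator on the index level
  obtain ⟨h₁, hh₁⟩ := isConj_iff.mp (Equiv.Perm.isConj_of_cycleType_eq hgT)
  have hh₁' : ∀ j, h₁ (g j) = g' (h₁ j) := by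
    intro j
    have := congrFun (congrArg (fun q : Perm (Fin k) => (q : Fin k → Fin k)) hh₁) (h₁ j)
    simp only [Perm.mul_apply] at this
    rw [Perm.inv_apply_self] at this
    exact this.symm ▸ rfl
  -- the type-matching permutation w on the fixed-point set of g'
  set F' : Finset (Fin k) := univ.filter fun j => g' j = j with hF'
  set E : Finset (Fin k) := univ.filter fun j => g j = j ∧ Ev (c j) with hE'
  set E' : Finset (Fin k) := univ.filter fun j => g' j = j ∧ Ev (c' j) with hE''
  have hAF' : E.image h₁ ⊆ F' := by
    intro x hx
    obtain ⟨j, hj, rfl⟩ := Finset.mem_image.mp hx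
    rw [hE', mem_filter] at hj
    rw [hF', mem_filter]
    exact ⟨mem_univ _, by rw [← hh₁' j, hj.2.1]⟩
  have hBF' : E' ⊆ F' := by
    intro x hx
    rw [hE'', mem_filter] at hx
    rw [hF', mem_filter]
    exact ⟨mem_univ _, hx.2.1⟩
  have hcardAB : (E.image h₁).card = E'.card := by
    rw [Finset.card_image_of_injective _ h₁.injective]
    exact hE
  obtain ⟨w, hwsupp, hwmap, hwcompl⟩ := exists_perm_mapsto hAF' hBF' hcardAB
  have hwcomm : w * g' = g' * w := by
    apply commute_of_support_subset_fixed
    intro x hx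
    have := hwsupp hx
    rw [hF', mem_filter] at this
    exact this.2
  set h₀ : Perm (Fin k) := w * h₁ with hh₀
  have hconj0 : h₀ * g * h₀⁻¹ = g' := by
    rw [hh₀]
    have : w * h₁ * g * (w * h₁)⁻¹ = w * (h₁ * g * h₁⁻¹) * w⁻¹ := by group
    rw [this, hh₁, hwcomm]
    group
  have hconj0' : ∀ j, h₀ (g j) = g' (h₀ j) := by
    intro j
    have := congrFun (congrArg (fun q : Perm (Fin k) => (q : Fin k → Fin k)) hconj0) (h₀ j)
    simp only [Perm.mul_apply] at this
    rw [Perm.inv_apply_self] at this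
    exact this.symm ▸ rfl
  -- the parity matching
  have hevmatch : ∀ j, g j = j → (Ev (c j) ↔ Ev (c' (h₀ j))) := by
    intro j hgj
    by_cases hev : Ev (c j)
    · have hjE : j ∈ E := by rw [hE', mem_filter]; exact ⟨mem_univ _, hgj, hev⟩
      have : h₁ j ∈ E.image h₁ := Finset.mem_image_of_mem _ hjE
      have hmem := hwmap _ this
      rw [hE'', mem_filter] at hmem
      have : h₀ j = w (h₁ j) := rfl
      rw [this]
      exact iff_of_true hev hmem.2.2
    · have hjF' : h₁ j ∈ F' := by
        rw [hF', mem_filter]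
        exact ⟨mem_univ _, by rw [← hh₁' j, hgj]⟩
      have hjA : h₁ j ∉ E.image h₁ := by
        intro hc
        obtain ⟨j₂, hj₂, hjj⟩ := Finset.mem_image.mp hc
        have : j₂ = j := h₁.injective hjj
        subst this
        rw [hE', mem_filter] at hj₂
        exact hev hj₂.2.2
      obtain ⟨hc1, hc2⟩ := hwcompl _ hjF' hjA
      have : h₀ j = w (h₁ j) := rfl
      rw [this]
      refine iff_of_false hev ?_
      intro hcon
      apply hc2
      rw [hE'', mem_filter]
      refine ⟨mem_univ _, ?_, hcon⟩
      rw [hF', mem_filter] at hc1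
      exact hc1.2
  -- the translation part
  set δ : Fin k → ZMod d := fun j => c' (h₀ j) - c j with hδ
  have hevδ : ∀ j, g j = j → Ev (δ j) := by
    intro j hgj
    by_cases hev : Ev (c j)
    · exact ev_sub_ev ((hevmatch j hgj).mp hev) hev
    · exact not_ev_sub_not_ev (fun hc => hev ((hevmatch j hgj).mpr hc)) hev
  have hδg : ∀ j, δ (g j) = δ j := by
    intro j
    rw [hδ]
    simp only
    rw [hcinv j, hconj0' j, hcinv' (h₀ j)]
  classical
  set t : Fin k → ZMod d := fun j =>
    if hj : g j = j then (hevδ j hj).choose else if j < g j then δ j else 0 with ht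
  have hteq : ∀ j, t j + t (g j) = δ j := by
    intro j
    by_cases hgj : g j = j
    · have h1 : t j = (hevδ j hgj).choose := by
        rw [ht]; simp only [dif_pos hgj]
      have h2 : t (g j) = t j := congrArg t hgj
      rw [h2, h1]
      exact (hevδ j hgj).choose_spec
    · have hne2 : g (g j) = j := hginv j
      have hgj2 : ¬ g (g j) = g j := by
        rw [hne2]
        exact fun hc => hgj hc.symm
      rcases lt_or_gt_of_ne (fun hc : j = g j => hgj hc.symm) with hlt | hgt
      · have h1 : t j = δ j := by
          rw [ht]; simp only [dif_neg hgj, if_pos hlt]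
        have h2 : t (g j) = 0 := by
          rw [ht]
          simp only [dif_neg hgj2]
          have : ¬ g j < g (g j) := by rw [hne2]; omega
          simp only [if_neg this]
        rw [h1, h2, add_zero]
      · have h1 : t j = 0 := by
          rw [ht]
          simp only [dif_neg hgj]
          have : ¬ j < g j := by omega
          simp only [if_neg this]
        have h2 : t (g j) = δ (g j) := by
          rw [ht]
          simp only [dif_neg hgj2]
          have : g j < g (g j) := by rw [hne2]; omega
          simp only [if_pos this]
        rw [h1, h2, hδg j, zero_add]
  -- assemble the conjugator
  refine ⟨B.lift (Cp h₀ t), B.lift_support _, ?_, ?_⟩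
  · rw [B.sigma_eq_lift]
    rw [show (B.lift (Cp h₀ t)) * B.lift Sp * (B.lift (Cp h₀ t))⁻¹ =
      B.lift (Cp h₀ t * Sp * (Cp h₀ t)⁻¹) by rw [map_mul, map_mul, map_inv]]
    congr 1
    show Cp h₀ t * Cp 1 (fun _ => (1 : ZMod d)) * (Cp h₀ t)⁻¹ = Sp
    rw [Cp_mul_Cp, Cp_inv, Cp_mul_Cp]
    show Cp ((h₀ * 1) * h₀⁻¹) _ = Cp 1 (fun _ => (1 : ZMod d))
    have h1 : (h₀ * 1) * h₀⁻¹ = 1 := by group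
    rw [h1]
    congr 1
    funext j
    simp
  · conv_lhs => rw [← B.lift_Qof π hπ, hQ]
    rw [show (B.lift (Cp h₀ t)) * B.lift (Qp g c) * (B.lift (Cp h₀ t))⁻¹ =
      B.lift (Cp h₀ t * Qp g c * (Cp h₀ t)⁻¹) by rw [map_mul, map_mul, map_inv]]
    rw [Cp_conj_Qp]
    rw [← B.lift_Qof π' hπ', hQ']
    congr 1
    rw [hconj0]
    congr 1
    funext j
    have := hteq (h₀⁻¹ j)
    have h2 : c' (h₀ (h₀⁻¹ j)) = c' j := by rw [Perm.apply_inv_self]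
    rw [hδ] at this
    simp only at this
    rw [h2] at this
    linear_combination this

end BlockSetup
end Block

section MoreFam
variable {α : Type*} [DecidableEq α] [Fintype α]

theorem pair_unique {A B : Finset α} (hAB : Disjoint A B) {f₁ g₁ f₂ g₂ : Perm α}
    (hf₁ : f₁.support ⊆ A) (hg₁ : g₁.support ⊆ A) (hf₂ : f₂.support ⊆ B)
    (hg₂ : g₂.support ⊆ B) (h : f₁ * f₂ = g₁ * g₂) : f₁ = g₁ ∧ f₂ = g₂ := by
  have key : g₁⁻¹ * f₁ = g₂ * f₂⁻¹ := by
    have := h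
    rw [← mul_inv_eq_iff_eq_mul] at this
    rw [← this]
    group
  have h1 : (g₁⁻¹ * f₁).support ⊆ A := by
    refine (Equiv.Perm.support_mul_le _ _).trans (sup_le ?_ hf₁)
    rw [Equiv.Perm.support_inv]; exact hg₁
  have h2 : (g₂ * f₂⁻¹).support ⊆ B := by
    refine (Equiv.Perm.support_mul_le _ _).trans (sup_le hg₂ ?_)
    rw [Equiv.Perm.support_inv]; exact hf₂
  have h3 : g₁⁻¹ * f₁ = 1 := by
    rw [← Equiv.Perm.support_eq_empty_iff, ← Finset.subset_empty]
    intro x hx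
    have hxA := h1 hx
    have hxB := h2 (key ▸ hx)
    exact absurd hxB (Finset.disjoint_left.mp hAB hxA)
  have hf1g1 : f₁ = g₁ := by
    have := h3
    rw [inv_mul_eq_one] at this
    exact this.symm
  refine ⟨hf1g1, ?_⟩
  rw [hf1g1] at h
  exact mul_left_cancel h

variable {L : ℕ} {S : Fin L → Finset α}

/-- conjugation by a product over disjoint blocks acts blockwise -/
theorem fam_conj_single (hS : ∀ i i', i ≠ i' → Disjoint (S i) (S i'))
    {A : Fin L → Perm α} (hA : ∀ i, (A i).support ⊆ S i) {i : Fin L} {X : Perm α}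
    (hX : X.support ⊆ S i) :
    (List.ofFn A).prod * X * ((List.ofFn A).prod)⁻¹ = A i * X * (A i)⁻¹ := by
  set P := (List.ofFn A).prod with hP
  have hPinv : ∀ x ∈ S i, P⁻¹ x = (A i)⁻¹ x := by
    intro x hx
    have h1 : (A i)⁻¹ x ∈ S i := mem_of_apply_mem (by
      rw [Equiv.Perm.support_inv]; exact hA i) hx
    have h2 : P ((A i)⁻¹ x) = x := by
      rw [hP, fam_apply_mem hS hA h1, Perm.apply_inv_self]
    apply P.injective
    rw [Perm.apply_inv_self, h2]
  have hiff : ∀ x, x ∈ S i ↔ P x ∈ S i := by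
    refine maps_into_iff (fun x hx => ?_)
    rw [hP, fam_apply_mem hS hA hx]
    exact mem_of_apply_mem (hA i) hx
  ext x
  simp only [Perm.mul_apply]
  by_cases hx : x ∈ S i
  · have h1 : (A i)⁻¹ x ∈ S i := mem_of_apply_mem (by
      rw [Equiv.Perm.support_inv]; exact hA i) hx
    have h2 : X ((A i)⁻¹ x) ∈ S i := mem_of_apply_mem hX h1
    rw [hPinv x hx, fam_apply_mem hS hA h2]
  · have h1' : P⁻¹ x ∉ S i := by
      intro hc
      have := (hiff (P⁻¹ x)).mp hc
      rw [Perm.apply_inv_self] at this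
      exact hx this
    have h2 : X (P⁻¹ x) = P⁻¹ x := by
      by_contra hc
      exact h1' (hX (mem_support.mpr hc))
    rw [h2, Perm.apply_inv_self]
    have h3 : (A i)⁻¹ x = x := by
      by_contra hc
      apply hx
      have : x ∈ (A i)⁻¹.support := mem_support.mpr hc
      rw [Equiv.Perm.support_inv] at this
      exact hA i this
    rw [h3]
    have h4 : X x = x := by
      by_contra hc
      exact hx (hX (mem_support.mpr hc))
    rw [h4]
    by_contra hc
    exact hx (hA i (mem_support.mpr (fun h => hc h.symm)))

end MoreFam

end DihAux

open DihAux

/-- Main dihedral theorem.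
`φ, ψ : D_{2m} → S_n` are generator-conjugate with respect to the generators `r, s` of
the dihedral group and satisfy `φ(r) = ψ(r) = σ = σ₁⋯σ_l` (each `σᵢ` a product of
`kᵢ` pairwise disjoint `dᵢ`-cycles `τ_{1,i},…,τ_{kᵢ,i}`, the `dᵢ` pairwise distinct).
Write `φ(s) = μπ₁⋯π_l`, `ψ(s) = μ'π₁'⋯π_l'` with `μ, μ' ∈ S_{Fix(σ)}` and
`πᵢ, πᵢ' ∈ H_{σᵢ}`.  Then `φ` and `ψ` are conjugate iff (i) `μ, μ'` are conjugate in
`S_n`, and (ii) for every `i`, `πᵢ, πᵢ'` are conjugate in `S_n` and their images under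
the induced homomorphism `H_{σᵢ} → H_{σᵢ}/K_{H_{σᵢ}} ≅ S_{kᵢ}` (encoded by how the
supports of the cycles are permuted) have the same cycle type. -/
theorem dihedral_homomorphism_conjugacy
    {m : ℕ} {n l : ℕ} (φ ψ : DihedralGroup m →* Equiv.Perm (Fin n))
    (σ : Equiv.Perm (Fin n)) (σs : Fin l → Equiv.Perm (Fin n))
    (k d : Fin l → ℕ) (hd : Function.Injective d)
    (τ : (i : Fin l) → Fin (k i) → Equiv.Perm (Fin n))
    (hcyc : ∀ i j, (τ i j).IsCycle)
    (hlen : ∀ i j, (τ i j).support.card = d i)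
    (hdisjτ : ∀ i, ∀ j j' : Fin (k i), j ≠ j' → Equiv.Perm.Disjoint (τ i j) (τ i j'))
    (hσs : ∀ i, σs i = (List.ofFn (τ i)).prod)
    (hdisjσ : ∀ i i', i ≠ i' → Equiv.Perm.Disjoint (σs i) (σs i'))
    (hσ : σ = (List.ofFn σs).prod)
    -- generator-conjugacy with respect to `r, s`
    (hgc : IsConj (φ (DihedralGroup.r 1)) (ψ (DihedralGroup.r 1)) ∧
           IsConj (φ (DihedralGroup.sr 0)) (ψ (DihedralGroup.sr 0)))
    (hr : φ (DihedralGroup.r 1) = σ) (hr' : ψ (DihedralGroup.r 1) = σ)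
    -- decompositions of `φ(s)` and `ψ(s)`
    (μ μ' : Equiv.Perm (Fin n)) (π π' : Fin l → Equiv.Perm (Fin n))
    (hμ : μ.support ⊆ σ.supportᶜ) (hμ' : μ'.support ⊆ σ.supportᶜ)
    (hπmem : ∀ i, π i ∈ Hgrp (σs i)) (hπ'mem : ∀ i, π' i ∈ Hgrp (σs i))
    (hφs : φ (DihedralGroup.sr 0) = μ * (List.ofFn π).prod)
    (hψs : ψ (DihedralGroup.sr 0) = μ' * (List.ofFn π').prod) :
    (∃ ρ : Equiv.Perm (Fin n), ∀ g : DihedralGroup m, ρ * φ g * ρ⁻¹ = ψ g) ↔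
      (IsConj μ μ' ∧
       ∀ i, IsConj (π i) (π' i) ∧
         ∃ g g' : Equiv.Perm (Fin (k i)),
           (∀ j : Fin (k i), ∀ p ∈ (τ i j).support, π i p ∈ (τ i (g j)).support) ∧
           (∀ j : Fin (k i), ∀ p ∈ (τ i j).support, π' i p ∈ (τ i (g' j)).support) ∧
           g.cycleType = g'.cycleType) := by
  classical
  set S : Fin l → Finset (Fin n) := fun i => (σs i).support with hSdef
  have hS : ∀ i i', i ≠ i' → Disjoint (S i) (S i') := fun i i' h =>
    Equiv.Perm.disjoint_iff_disjoint_support.mp (hdisjσ i i' h)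
  have hsubσs : ∀ i, (σs i).support ⊆ S i := fun i => le_refl _
  have hsubπ : ∀ i, (π i).support ⊆ S i := fun i => (hπmem i).1
  have hsubπ' : ∀ i, (π' i).support ⊆ S i := fun i => (hπ'mem i).1
  have hσap : ∀ i, ∀ x ∈ S i, σ x = σs i x := by
    intro i x hx
    rw [hσ]
    exact fam_apply_mem hS hsubσs hx
  have hSsubσ : ∀ i, S i ⊆ σ.support := by
    intro i x hx
    rw [Equiv.Perm.mem_support, hσap i x hx]
    exact Equiv.Perm.mem_support.mp hx
  have prodsupp : ∀ q : Fin l → Equiv.Perm (Fin n), (∀ i, (q i).support ⊆ S i) →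
      (List.ofFn q).prod.support ⊆ σ.support := by
    intro q hq x hx
    by_cases hc : ∃ i, x ∈ S i
    · obtain ⟨i, hi⟩ := hc
      exact hSsubσ i hi
    · push_neg at hc
      exfalso
      exact Equiv.Perm.mem_support.mp hx (fam_apply_of_forall_not_mem hq hc)
  have hdisjAB : Disjoint (σ.supportᶜ) σ.support := disjoint_compl_left
  -- generic extraction of relations from the dihedral relations
  have extract : ∀ (ν : Equiv.Perm (Fin n)) (p : Fin l → Equiv.Perm (Fin n)),
      ν.support ⊆ σ.supportᶜ → (∀ i, (p i).support ⊆ S i) →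
      ((ν * (List.ofFn p).prod) * (ν * (List.ofFn p).prod) = 1) →
      ((ν * (List.ofFn p).prod) * σ * (ν * (List.ofFn p).prod)⁻¹ = σ⁻¹) →
      ∀ i, (p i) * (p i) = 1 ∧ (p i) * σs i * (p i)⁻¹ = (σs i)⁻¹ := by
    intro ν p hν hp hsq hconj
    have hPsupp : (List.ofFn p).prod.support ⊆ σ.support := prodsupp p hp
    set Pp := (List.ofFn p).prod with hPp
    have hdisj : Equiv.Perm.Disjoint ν Pp := by
      rw [Equiv.Perm.disjoint_iff_disjoint_support]
      exact Finset.disjoint_of_subset_left hν (Finset.disjoint_of_subset_right hPsupp hdisjAB)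
    have hcomm : ν * Pp = Pp * ν := hdisj.commute
    have hsq2 : (ν * ν) * (Pp * Pp) = 1 := by
      have hstep : (ν * ν) * (Pp * Pp) = (ν * Pp) * (ν * Pp) := by
        calc (ν * ν) * (Pp * Pp) = ν * (ν * Pp) * Pp := by group
          _ = ν * (Pp * ν) * Pp := by rw [hcomm]
          _ = (ν * Pp) * (ν * Pp) := by group
      rw [hstep, hsq]
    obtain ⟨hν2, hP2⟩ := pair_unique (g₁ := 1) (g₂ := 1) hdisjAB
      ((Equiv.Perm.support_mul_le _ _).trans (sup_le hν hν)) (by simp)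
      ((Equiv.Perm.support_mul_le _ _).trans (sup_le hPsupp hPsupp)) (by simp)
      (by rw [hsq2, one_mul])
    have hpsq : ∀ i, p i * p i = 1 := by
      have h1 : (List.ofFn fun i => (p i) ^ 2).prod = 1 := by
        rw [fam_prod_sq hS hp, ← hPp, sq, hP2]
      have h2 := fam_prod_eq_one hS
        (fun i => (Equiv.Perm.support_pow_le (p i) 2).trans (hp i)) h1
      intro i
      have := h2 i
      rwa [sq] at this
    have hνσ : Commute ν σ := by
      have : Equiv.Perm.Disjoint ν σ := by
        rw [Equiv.Perm.disjoint_iff_disjoint_support]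
        exact Finset.disjoint_of_subset_left hν hdisjAB
      exact this.commute
    have hPpσ : Pp * σ * Pp⁻¹ = σ⁻¹ := by
      have h1 : ν * (Pp * σ * Pp⁻¹) * ν⁻¹ = σ⁻¹ := by
        rw [← hconj]; group
      have h2 : Pp * σ * Pp⁻¹ = ν⁻¹ * σ⁻¹ * ν := by
        rw [← h1]; group
      rw [h2]
      have h3 : Commute ν⁻¹ σ⁻¹ := (hνσ.inv_right).inv_left
      rw [h3.eq]
      group
    intro i
    refine ⟨hpsq i, ?_⟩
    have hconjs : ∀ i', (Pp * σs i' * Pp⁻¹) = p i' * σs i' * (p i')⁻¹ := fun i' =>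
      fam_conj_single hS hp (hsubσs i')
    have hsupps : ∀ i', (Pp * σs i' * Pp⁻¹).support ⊆ S i' := by
      intro i'
      rw [hconjs i']
      refine (Equiv.Perm.support_mul_le _ _).trans (sup_le ?_ ?_)
      · exact (Equiv.Perm.support_mul_le _ _).trans (sup_le (hp i') (hsubσs i'))
      · rw [Equiv.Perm.support_inv]; exact hp i'
    have hprod1 : (List.ofFn fun i' => Pp * σs i' * Pp⁻¹).prod = σ⁻¹ := by
      rw [← fam_conj, ← hσ, hPpσ]
    have hprod2 : (List.ofFn fun i' => (σs i')⁻¹).prod = σ⁻¹ := by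
      rw [fam_prod_inv hS hsubσs, ← hσ]
    have := fam_unique hS hsupps
      (fun i' => by simp only [Equiv.Perm.support_inv]; exact hsubσs i')
      (hprod1.trans hprod2.symm)
    have h4 := congrFun this i
    rw [hconjs i] at h4
    exact h4
  -- the relations for both homomorphisms
  have hφ2 : (μ * (List.ofFn π).prod) * (μ * (List.ofFn π).prod) = 1 := by
    rw [← hφs, ← map_mul, DihedralGroup.sr_mul_sr, sub_zero, ← DihedralGroup.one_def, map_one]
  have hψ2 : (μ' * (List.ofFn π').prod) * (μ' * (List.ofFn π').prod) = 1 := by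
    rw [← hψs, ← map_mul, DihedralGroup.sr_mul_sr, sub_zero, ← DihedralGroup.one_def, map_one]
  have hsr0inv : (DihedralGroup.sr (0 : ZMod m))⁻¹ = DihedralGroup.sr 0 :=
    (inv_eq_of_mul_eq_one_right (DihedralGroup.sr_mul_self 0))
  have hr1inv : (DihedralGroup.r (1 : ZMod m))⁻¹ = DihedralGroup.r (-1) :=
    (inv_eq_of_mul_eq_one_right (by
      rw [DihedralGroup.r_mul_r, add_neg_cancel]
      exact DihedralGroup.one_def.symm))
  have hgenconj : DihedralGroup.sr (0 : ZMod m) * DihedralGroup.r 1 *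
      (DihedralGroup.sr 0)⁻¹ = (DihedralGroup.r 1)⁻¹ := by
    rw [hsr0inv, hr1inv, DihedralGroup.sr_mul_r, DihedralGroup.sr_mul_sr]
    congr 1
    ring
  have hφconj : (μ * (List.ofFn π).prod) * σ * (μ * (List.ofFn π).prod)⁻¹ = σ⁻¹ := by
    rw [← hφs, ← hr, ← map_inv, ← map_mul, ← map_mul, hgenconj, map_inv]
  have hψconj : (μ' * (List.ofFn π').prod) * σ * (μ' * (List.ofFn π').prod)⁻¹ = σ⁻¹ := by
    rw [← hψs, ← hr', ← map_inv, ← map_mul, ← map_mul, hgenconj, map_inv]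
  have hrelφ := extract μ π hμ hsubπ hφ2 hφconj
  have hrelψ := extract μ' π' hμ' hsubπ' hψ2 hψconj
  -- degenerate blocks
  have hdeg : ∀ i, k i = 0 → π i = 1 ∧ π' i = 1 := by
    intro i h0
    have hσs0 : σs i = 1 := by
      rw [hσs i]
      have : List.ofFn (τ i) = [] := by
        apply List.eq_nil_of_length_eq_zero
        simp [h0]
      rw [this, List.prod_nil]
    constructor
    · rw [← Equiv.Perm.support_eq_empty_iff]
      have := hsubπ i
      rw [hSdef] at this
      simp only [hσs0, Equiv.Perm.support_one] at this
      exact Finset.subset_empty.mp this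
    · rw [← Equiv.Perm.support_eq_empty_iff]
      have := hsubπ' i
      rw [hSdef] at this
      simp only [hσs0, Equiv.Perm.support_one] at this
      exact Finset.subset_empty.mp this
  constructor
  · -- FORWARD
    rintro ⟨ρ, hρ⟩
    have hρσ : ρ * σ * ρ⁻¹ = σ := by
      have := hρ (DihedralGroup.r 1)
      rwa [hr, hr'] at this
    have hρc : ρ * σ = σ * ρ := mul_inv_eq_iff_eq_mul.mp hρσ
    have hρs : ρ * (μ * (List.ofFn π).prod) * ρ⁻¹ = μ' * (List.ofFn π').prod := by
      have := hρ (DihedralGroup.sr 0)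
      rwa [hφs, hψs] at this
    have hpres : ∀ x ∈ σ.support, ρ x ∈ σ.support := by
      intro x hx
      rw [Equiv.Perm.mem_support] at hx ⊢
      intro hc
      have h1 : ρ (σ x) = σ (ρ x) := by
        have := congrFun (congrArg (fun q : Equiv.Perm (Fin n) => (q : Fin n → Fin n)) hρc) x
        simpa using this
      rw [hc] at h1
      exact hx (ρ.injective h1)
    have hρcpt : ∀ x, ρ (σ x) = σ (ρ x) := by
      intro x
      have := congrFun (congrArg (fun q : Equiv.Perm (Fin n) => (q : Fin n → Fin n)) hρc) x
      simpa using this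
    have hinvc : ρ⁻¹ * σ = σ * ρ⁻¹ := by
      calc ρ⁻¹ * σ = ρ⁻¹ * σ * (ρ * ρ⁻¹) := by group
        _ = ρ⁻¹ * (σ * ρ) * ρ⁻¹ := by group
        _ = ρ⁻¹ * (ρ * σ) * ρ⁻¹ := by rw [← hρc]
        _ = σ * ρ⁻¹ := by group
    have hS_in : ∀ i, ∀ j j' : Fin (k i), j ≠ j' →
        Disjoint ((τ i j).support) ((τ i j').support) :=
      fun i j j' h => Equiv.Perm.disjoint_iff_disjoint_support.mp (hdisjτ i j j' h)
    have hσsap : ∀ i j, ∀ x ∈ (τ i j).support, σs i x = τ i j x := by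
      intro i j x hx
      rw [hσs i]
      exact fam_apply_mem (hS_in i) (fun j => le_refl _) hx
    have tau_sub : ∀ i j, (τ i j).support ⊆ S i := by
      intro i j x hx
      have h1 : σs i x = τ i j x := hσsap i j x hx
      have : x ∈ (σs i).support := by
        rw [Equiv.Perm.mem_support, h1]
        exact Equiv.Perm.mem_support.mp hx
      exact this
    have sigma_on_tau : ∀ i j, ∀ x ∈ (τ i j).support, σ x = τ i j x := fun i j x hx =>
      (hσap i x (tau_sub i j hx)).trans (hσsap i j x hx)
    have tau_closed : ∀ i j (v : ℕ), ∀ x ∈ (τ i j).support,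
        (σ ^ v) x ∈ (τ i j).support ∧ (σ ^ v) x = (τ i j ^ v) x := by
      intro i j v
      induction v with
      | zero => intro x hx; simpa using hx
      | succ v ih =>
        intro x hx
        obtain ⟨h1, h2⟩ := ih x hx
        have h3 : σ ((σ ^ v) x) = τ i j ((σ ^ v) x) := sigma_on_tau i j _ h1
        constructor
        · rw [pow_succ', Perm.mul_apply, h3]
          exact Equiv.Perm.apply_mem_support.mpr h1
        · rw [pow_succ', Perm.mul_apply, h3, h2, pow_succ', Perm.mul_apply]
    have commpow : ∀ (ρ' : Equiv.Perm (Fin n)), ρ' * σ = σ * ρ' → ∀ (v : ℕ) (x : Fin n),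
        ρ' ((σ ^ v) x) = (σ ^ v) (ρ' x) := by
      intro ρ' hc v x
      have hcc : Commute ρ' (σ ^ v) := Commute.pow_right hc v
      have := congrFun (congrArg (fun q : Equiv.Perm (Fin n) => (q : Fin n → Fin n)) hcc.eq) x
      simpa using this
    have mapsto : ∀ (ρ' : Equiv.Perm (Fin n)), ρ' * σ = σ * ρ' →
        ∀ i j i' j' (x : Fin n), x ∈ (τ i j).support → ρ' x ∈ (τ i' j').support →
        ∀ y ∈ (τ i j).support, ρ' y ∈ (τ i' j').support := by
      intro ρ' hc i j i' j' x hx hρx y hy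
      obtain ⟨v, hv⟩ := (hcyc i j).exists_pow_eq (Equiv.Perm.mem_support.mp hx)
        (Equiv.Perm.mem_support.mp hy)
      have h1 : (σ ^ v) x = y := by rw [(tau_closed i j v x hx).2, hv]
      rw [← h1, commpow ρ' hc v x]
      exact (tau_closed i' j' v (ρ' x) hρx).1
    have blockpres : ∀ i, ∀ x ∈ S i, ρ x ∈ S i := by
      intro i x hx
      obtain ⟨j, hj⟩ : ∃ j, x ∈ (τ i j).support := by
        by_contra hc
        push_neg at hc
        have : σs i x = x := by
          rw [hσs i]
          exact fam_apply_of_forall_not_mem (fun j => le_refl _) hc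
        exact Equiv.Perm.mem_support.mp hx this
      have hρx : ρ x ∈ σ.support := hpres x (hSsubσ i hx)
      obtain ⟨i', hi'⟩ : ∃ i', ρ x ∈ S i' := by
        by_contra hc
        push_neg at hc
        have : σ (ρ x) = ρ x := by
          rw [hσ]
          exact fam_apply_of_forall_not_mem hsubσs hc
        exact Equiv.Perm.mem_support.mp hρx this
      obtain ⟨j', hj'⟩ : ∃ j', ρ x ∈ (τ i' j').support := by
        by_contra hc
        push_neg at hc
        have : σs i' (ρ x) = ρ x := by
          rw [hσs i']
          exact fam_apply_of_forall_not_mem (fun j => le_refl _) hc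
        exact Equiv.Perm.mem_support.mp hi' this
      have hmap1 := mapsto ρ hρc i j i' j' x hj hj'
      have hxinv : ρ⁻¹ (ρ x) ∈ (τ i j).support := by
        rw [Equiv.Perm.inv_apply_self]; exact hj
      have hmap2 := mapsto ρ⁻¹ hinvc i' j' i j (ρ x) hj' hxinv
      have hc1 : (τ i j).support.card ≤ (τ i' j').support.card :=
        Finset.card_le_card_of_injOn (fun y => ρ y) (fun y hy => hmap1 y hy)
          (ρ.injective.injOn)
      have hc2 : (τ i' j').support.card ≤ (τ i j).support.card :=
        Finset.card_le_card_of_injOn (fun y => ρ⁻¹ y) (fun y hy => hmap2 y hy)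
          ((ρ⁻¹).injective.injOn)
      have hdd : d i = d i' := by
        have e1 := hlen i j
        have e2 := hlen i' j'
        omega
      have hii : i = i' := hd hdd
      subst hii
      exact tau_sub i j' hj'
    have hρcblock : ∀ i, ρ * σs i = σs i * ρ := by
      intro i
      ext x
      simp only [Perm.mul_apply]
      by_cases hx : x ∈ S i
      · have h1 : σs i x = σ x := (hσap i x hx).symm
        have h3 : ρ x ∈ S i := blockpres i x hx
        rw [h1, hρcpt x, hσap i _ h3]
      · have h1 : σs i x = x := by
          by_contra hc
          exact hx (hsubσs i (Equiv.Perm.mem_support.mpr hc))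
        have h3 : ρ x ∉ S i := fun hc => hx ((maps_into_iff (blockpres i) x).mpr hc)
        have h4 : σs i (ρ x) = ρ x := by
          by_contra hc
          exact h3 (hsubσs i (Equiv.Perm.mem_support.mpr hc))
        rw [h1, h4]
    have hρs2 : (ρ * μ * ρ⁻¹) * (ρ * (List.ofFn π).prod * ρ⁻¹) = μ' * (List.ofFn π').prod := by
      rw [← hρs]; group
    have hcomple : ∀ x, x ∈ σ.supportᶜ → ρ x ∈ σ.supportᶜ := by
      intro x hx
      rw [Finset.mem_compl] at hx ⊢
      intro hc
      exact hx ((maps_into_iff hpres x).mpr hc)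
    have hsuppconj : ∀ (X : Equiv.Perm (Fin n)) (T : Finset (Fin n)), X.support ⊆ T →
        (∀ x ∈ T, ρ x ∈ T) → (ρ * X * ρ⁻¹).support ⊆ T := by
      intro X T hXT hT x hx
      rw [Equiv.Perm.support_conj] at hx
      obtain ⟨y, hy, rfl⟩ := Finset.mem_map.mp hx
      exact hT y (hXT hy)
    obtain ⟨hμeq, hPeq⟩ := pair_unique hdisjAB
      (hsuppconj μ _ hμ hcomple) hμ'
      (hsuppconj _ _ (prodsupp π hsubπ) hpres) (prodsupp π' hsubπ') hρs2
    refine ⟨isConj_iff.mpr ⟨ρ, hμeq⟩, ?_⟩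
    intro i
    have hπeq : ρ * π i * ρ⁻¹ = π' i := by
      have h1 : (List.ofFn fun i => ρ * π i * ρ⁻¹).prod = (List.ofFn π').prod := by
        rw [← fam_conj, hPeq]
      have := fam_unique hS (fun i => hsuppconj _ _ (hsubπ i) (blockpres i)) hsubπ' h1
      exact congrFun this i
    refine ⟨isConj_iff.mpr ⟨ρ, hπeq⟩, ?_⟩
    rcases Nat.eq_zero_or_pos (k i) with hk0 | hkpos
    · obtain ⟨hp1, hp1'⟩ := hdeg i hk0
      refine ⟨1, 1, ?_, ?_, rfl⟩
      · intro j; exact absurd j.isLt (by omega)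
      · intro j; exact absurd j.isLt (by omega)
    · have hd2 : 2 ≤ d i := by
        rw [← hlen i ⟨0, hkpos⟩]
        exact (hcyc i ⟨0, hkpos⟩).two_le_card_support
      haveI : NeZero (d i) := ⟨by omega⟩
      have hres := BlockSetup.block_forward
        (B := (⟨τ i, hd2, hcyc i, hlen i, hdisjτ i⟩ : BlockSetup (Fin n) (k i) (d i)))
        (π i) (π' i) ρ
        (by rw [show (⟨τ i, hd2, hcyc i, hlen i, hdisjτ i⟩ :
            BlockSetup (Fin n) (k i) (d i)).sigma = σs i from (hσs i).symm]; exact hsubπ i)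
        (by rw [show (⟨τ i, hd2, hcyc i, hlen i, hdisjτ i⟩ :
            BlockSetup (Fin n) (k i) (d i)).sigma = σs i from (hσs i).symm]; exact hsubπ' i)
        (by rw [show (⟨τ i, hd2, hcyc i, hlen i, hdisjτ i⟩ :
            BlockSetup (Fin n) (k i) (d i)).sigma = σs i from (hσs i).symm]; exact (hrelφ i).2)
        (by rw [show (⟨τ i, hd2, hcyc i, hlen i, hdisjτ i⟩ :
            BlockSetup (Fin n) (k i) (d i)).sigma = σs i from (hσs i).symm]; exact blockpres i)
        (by rw [show (⟨τ i, hd2, hcyc i, hlen i, hdisjτ i⟩ :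
            BlockSetup (Fin n) (k i) (d i)).sigma = σs i from (hσs i).symm]; exact hρcblock i)
        hπeq
      exact hres
  · rintro ⟨hμconj, hblocks⟩
    obtain ⟨ρ₀, hρ₀supp, hρ₀conj⟩ := exists_conj_supported hμ hμ' hμconj
    have hexists : ∀ i, ∃ ρi : Equiv.Perm (Fin n), ρi.support ⊆ (σs i).support ∧
        ρi * σs i * ρi⁻¹ = σs i ∧ ρi * π i * ρi⁻¹ = π' i := by
      intro i
      rcases Nat.eq_zero_or_pos (k i) with hk0 | hkpos
      · obtain ⟨hp1, hp1'⟩ := hdeg i hk0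
        refine ⟨1, by simp, by group, ?_⟩
        rw [hp1, hp1']
        group
      · obtain ⟨hπc, g, g', hm1, hm2, hgT⟩ := hblocks i
        have hd2 : 2 ≤ d i := by
          rw [← hlen i ⟨0, hkpos⟩]
          exact (hcyc i ⟨0, hkpos⟩).two_le_card_support
        haveI : NeZero (d i) := ⟨by omega⟩
        have hsupp2 : (π i).support.card = (π' i).support.card := by
          have h1 := Equiv.Perm.isConj_iff_cycleType_eq.mp hπc
          rw [← Equiv.Perm.sum_cycleType, ← Equiv.Perm.sum_cycleType, h1]
        have hres := BlockSetup.block_backward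
          (B := (⟨τ i, hd2, hcyc i, hlen i, hdisjτ i⟩ : BlockSetup (Fin n) (k i) (d i)))
          (π i) (π' i)
          (by rw [show (⟨τ i, hd2, hcyc i, hlen i, hdisjτ i⟩ :
              BlockSetup (Fin n) (k i) (d i)).sigma = σs i from (hσs i).symm]; exact hsubπ i)
          (by rw [show (⟨τ i, hd2, hcyc i, hlen i, hdisjτ i⟩ :
              BlockSetup (Fin n) (k i) (d i)).sigma = σs i from (hσs i).symm]; exact hsubπ' i)
          (by rw [show (⟨τ i, hd2, hcyc i, hlen i, hdisjτ i⟩ :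
              BlockSetup (Fin n) (k i) (d i)).sigma = σs i from (hσs i).symm]
              exact (hrelφ i).2)
          (by rw [show (⟨τ i, hd2, hcyc i, hlen i, hdisjτ i⟩ :
              BlockSetup (Fin n) (k i) (d i)).sigma = σs i from (hσs i).symm]
              exact (hrelψ i).2)
          ((hrelφ i).1) ((hrelψ i).1) hsupp2 g g' hm1 hm2 hgT
        obtain ⟨ρi, h1, h2, h3⟩ := hres
        rw [show (⟨τ i, hd2, hcyc i, hlen i, hdisjτ i⟩ :
            BlockSetup (Fin n) (k i) (d i)).sigma = σs i from (hσs i).symm] at h1 h2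
        exact ⟨ρi, h1, h2, h3⟩
    choose ρb hbsupp hbσ hbπ using hexists
    have hsubρb : ∀ i, (ρb i).support ⊆ S i := hbsupp
    set PR := (List.ofFn ρb).prod with hPR
    have hPRsupp : PR.support ⊆ σ.support := prodsupp ρb hsubρb
    have hρ₀comm : ∀ X : Equiv.Perm (Fin n), X.support ⊆ σ.support → ρ₀ * X = X * ρ₀ := by
      intro X hX
      have hd1 : Equiv.Perm.Disjoint ρ₀ X := by
        rw [Equiv.Perm.disjoint_iff_disjoint_support]
        exact Finset.disjoint_of_subset_left hρ₀supp
          (Finset.disjoint_of_subset_right hX hdisjAB)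
      exact hd1.commute
    set ρ := ρ₀ * PR with hρdef
    have hPRσs : ∀ i, PR * σs i * PR⁻¹ = σs i := by
      intro i
      rw [hPR, fam_conj_single hS hsubρb (hsubσs i)]
      exact hbσ i
    have hPRπ : ∀ i, PR * π i * PR⁻¹ = π' i := by
      intro i
      rw [hPR, fam_conj_single hS hsubρb (hsubπ i)]
      exact hbπ i
    have hσconj : ρ * σ * ρ⁻¹ = σ := by
      have h1 : PR * σ * PR⁻¹ = σ := by
        conv_lhs => rw [hσ, fam_conj]
        rw [show (fun i => PR * σs i * PR⁻¹) = σs from funext hPRσs, ← hσ]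
      have h2 : ρ₀ * σ * ρ₀⁻¹ = σ := by
        rw [hρ₀comm σ (le_refl _)]; group
      rw [hρdef]
      have h3 : ρ₀ * PR * σ * (ρ₀ * PR)⁻¹ = ρ₀ * (PR * σ * PR⁻¹) * ρ₀⁻¹ := by group
      rw [h3, h1, h2]
    have hsconj : ρ * (μ * (List.ofFn π).prod) * ρ⁻¹ = μ' * (List.ofFn π').prod := by
      have hPμ : PR * μ * PR⁻¹ = μ := by
        have hdisj2 : Equiv.Perm.Disjoint PR μ := by
          rw [Equiv.Perm.disjoint_iff_disjoint_support]
          exact Finset.disjoint_of_subset_left hPRsupp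
            (Finset.disjoint_of_subset_right hμ disjoint_compl_right)
        rw [hdisj2.commute]; group
      have hPP : PR * (List.ofFn π).prod * PR⁻¹ = (List.ofFn π').prod := by
        rw [fam_conj, show (fun i => PR * π i * PR⁻¹) = π' from funext hPRπ]
      have hρ₀P' : ρ₀ * (List.ofFn π').prod * ρ₀⁻¹ = (List.ofFn π').prod := by
        rw [hρ₀comm _ (prodsupp π' hsubπ')]; group
      rw [hρdef]
      calc ρ₀ * PR * (μ * (List.ofFn π).prod) * (ρ₀ * PR)⁻¹
          = (ρ₀ * (PR * μ * PR⁻¹) * ρ₀⁻¹) * (ρ₀ * (PR * (List.ofFn π).prod * PR⁻¹) * ρ₀⁻¹) := by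
            group
        _ = (ρ₀ * μ * ρ₀⁻¹) * (ρ₀ * (List.ofFn π').prod * ρ₀⁻¹) := by rw [hPμ, hPP]
        _ = μ' * (List.ofFn π').prod := by rw [hρ₀conj, hρ₀P']
    refine ⟨ρ, ?_⟩
    have hθ : ((MulAut.conj ρ).toMonoidHom.comp φ) = ψ := by
      apply dihedral_hom_ext
      · show (MulAut.conj ρ) (φ (DihedralGroup.r 1)) = ψ (DihedralGroup.r 1)
        rw [hr, hr']
        simpa [MulAut.conj_apply] using hσconj
      · show (MulAut.conj ρ) (φ (DihedralGroup.sr 0)) = ψ (DihedralGroup.sr 0)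
        rw [hφs, hψs]
        simpa [MulAut.conj_apply] using hsconj
    intro g
    have := DFunLike.congr_fun hθ g
    simpa [MulAut.conj_apply] using this
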